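/- arXiv:1011.4776 — 4 statements merged into one kernel-verified Lean document; each statement's English description precedes it below -/
import Mathlib

section
/- Under the stated Bourgain–Delbaen assumptions, there exists exactly one admissible pair of families ((d_γ)_{γ∈Γ}, (P_q)_{q≥0}), i.e. the vectors d_γ ∈ ℓ¹(Γ) and the bounded linear operators P_q on ℓ¹(Γ) are uniquely determined by properties (A) and (B). -/
noncomputable section

/-- `ℓ¹(Γ)`. -/
abbrev ellOne (Γ : Type*) : Type _ := lp (fun _ : Γ => ℝ) 1

/-- The coordinate vector `e_γ` in `ℓ¹(Γ)`. -/
noncomputable def eVec {Γ : Type*} (γ : Γ) : ellOne Γ :=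
  letI := Classical.decEq Γ
  lp.single 1 γ (1 : ℝ)

/-- The datum `τ(γ)` attached to an element `γ` in a Bourgain–Delbaen construction:
Type 0, Type 1 or Type 2. -/
inductive BDDatum (Γ : Type*) where
  | type0 (α : ℝ) (ξ : Γ)
  | type1 (p : ℕ) (β : ℝ) (b : ellOne Γ)
  | type2 (α : ℝ) (ξ : Γ) (p : ℕ) (β : ℝ) (b : ellOne Γ)

/-- The data of a Bourgain–Delbaen construction: pairwise disjoint nonempty finite
sets `Δ_q` (`q ≥ 1`) covering `Γ`, a constant `0 < θ < 1/2`, and an assignment `τ`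
of a datum of Type 0, 1 or 2 to each `γ ∈ Δ_{q+1}`, `q ≥ 1`.
Here `⋃ p ∈ Set.Icc 1 q, Δ p` plays the role of `Γ_q` (empty for `q = 0`). -/
structure BDData (Γ : Type*) where
  Δ : ℕ → Set Γ
  Δ_finite : ∀ q, 1 ≤ q → (Δ q).Finite
  Δ_nonempty : ∀ q, 1 ≤ q → (Δ q).Nonempty
  Δ_disjoint : ∀ p q, 1 ≤ p → 1 ≤ q → p ≠ q → Disjoint (Δ p) (Δ q)
  Δ_cover : ⋃ q ∈ {q : ℕ | 1 ≤ q}, Δ q = Set.univ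
  θ : ℝ
  θ_pos : 0 < θ
  θ_lt_half : θ < 1 / 2
  τ : Γ → BDDatum Γ
  τ_spec : ∀ q, 1 ≤ q → ∀ γ ∈ Δ (q + 1),
    match τ γ with
    | .type0 α ξ => 0 ≤ α ∧ α ≤ 1 ∧ ξ ∈ ⋃ r ∈ Set.Icc 1 q, Δ r
    | .type1 p β b => p < q ∧ 0 < β ∧ β ≤ θ ∧ ‖b‖ ≤ 1 ∧
        ∀ γ' : Γ, γ' ∉ (⋃ r ∈ Set.Icc 1 q, Δ r) \ (⋃ r ∈ Set.Icc 1 p, Δ r) → b γ' = 0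
    | .type2 α ξ p β b => 0 < α ∧ α ≤ 1 ∧ 1 ≤ p ∧ p < q ∧
        ξ ∈ (⋃ r ∈ Set.Icc 1 p, Δ r) ∧ 0 < β ∧ β ≤ θ ∧ ‖b‖ ≤ 1 ∧
        ∀ γ' : Γ, γ' ∉ (⋃ r ∈ Set.Icc 1 q, Δ r) \ (⋃ r ∈ Set.Icc 1 p, Δ r) → b γ' = 0

/-- A pair of families `(d_γ)_{γ ∈ Γ}`, `(P_q)_{q ≥ 0}` is admissible if `P_0 = 0` and
properties (A) and (B) of the Bourgain–Delbaen construction hold. -/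
def Admissible {Γ : Type*} (D : BDData Γ) (d : Γ → ellOne Γ)
    (P : ℕ → ellOne Γ →L[ℝ] ellOne Γ) : Prop :=
  P 0 = 0 ∧
  (∀ q, 1 ≤ q → ∀ γ : Γ,
    (γ ∈ ⋃ r ∈ Set.Icc 1 q, D.Δ r → P q (d γ) = d γ) ∧
    (γ ∉ ⋃ r ∈ Set.Icc 1 q, D.Δ r → P q (d γ) = 0)) ∧
  (∀ γ ∈ D.Δ 1, eVec γ - d γ = 0) ∧
  (∀ q, 1 ≤ q → ∀ γ ∈ D.Δ (q + 1),
    eVec γ - d γ =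
      match D.τ γ with
      | .type0 α ξ => α • eVec ξ
      | .type1 p β b => β • ((b : ellOne Γ) - P p b)
      | .type2 α ξ p β b => α • eVec ξ + β • ((b : ellOne Γ) - P p b))

namespace BD9

variable {Γ : Type*}

set_option synthInstance.maxHeartbeats 800000 in
instance : T2Space (ellOne Γ) := by
  infer_instance

lemma hasSum_norm_coord (x : ellOne Γ) : HasSum (fun η => ‖x η‖) ‖x‖ := by
  have := lp.hasSum_norm (p := 1) (by norm_num) x
  simpa using this

lemma summable_norm_coord (x : ellOne Γ) : Summable (fun η => ‖x η‖) :=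
  (hasSum_norm_coord x).summable

lemma norm_eq_tsum (x : ellOne Γ) : ‖x‖ = ∑' η, ‖x η‖ :=
  (hasSum_norm_coord x).tsum_eq.symm

lemma eVec_apply_self (γ : Γ) : (eVec γ) γ = 1 := by
  classical
  simp [eVec, lp.single_apply]

lemma eVec_apply_ne {γ η : Γ} (h : η ≠ γ) : (eVec γ) η = 0 := by
  classical
  simp [eVec, lp.single_apply, h]

lemma norm_eVec (γ : Γ) : ‖eVec γ‖ = 1 := by
  classical
  have := lp.norm_single (p := 1) (E := fun _ : Γ => ℝ) (by norm_num) γ (1:ℝ)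
  simpa [eVec] using this

lemma hasSum_coord_smul (x : ellOne Γ) : HasSum (fun η => x η • eVec η) x := by
  classical
  have := lp.hasSum_single (p := 1) (E := fun _ : Γ => ℝ) (by norm_num) x
  refine this.congr_fun fun η => ?_
  have : lp.single (E := fun _ : Γ => ℝ) 1 η (x η) = x η • lp.single 1 η (1:ℝ) := by
    rw [← lp.single_smul]
    norm_num
  rw [this, eVec]

lemma norm_smul_le_of_bdd (x : ellOne Γ) {v : Γ → ellOne Γ} {M : ℝ}
    (hv : ∀ η, ‖v η‖ ≤ M) (η : Γ) : ‖x η • v η‖ ≤ ‖x η‖ * M := by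
  rw [norm_smul]
  exact mul_le_mul_of_nonneg_left (hv η) (norm_nonneg _)

lemma summable_norm_smul_of_bdd (x : ellOne Γ) {v : Γ → ellOne Γ} {M : ℝ}
    (hv : ∀ η, ‖v η‖ ≤ M) : Summable (fun η => ‖x η • v η‖) :=
  Summable.of_nonneg_of_le (fun _ => norm_nonneg _) (norm_smul_le_of_bdd x hv)
    ((summable_norm_coord x).mul_right M)

lemma summable_smul_of_bdd (x : ellOne Γ) {v : Γ → ellOne Γ} {M : ℝ}
    (hv : ∀ η, ‖v η‖ ≤ M) : Summable (fun η => x η • v η) :=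
  Summable.of_norm (summable_norm_smul_of_bdd x hv)

lemma norm_tsum_smul_le (x : ellOne Γ) {v : Γ → ellOne Γ} {M : ℝ}
    (hv : ∀ η, ‖v η‖ ≤ M) : ‖∑' η, x η • v η‖ ≤ M * ‖x‖ := by
  have h1 : ‖∑' η, x η • v η‖ ≤ ∑' η, ‖x η • v η‖ :=
    norm_tsum_le_tsum_norm (summable_norm_smul_of_bdd x hv)
  have h2 : ∑' η, ‖x η • v η‖ ≤ ∑' η, ‖x η‖ * M :=
    Summable.tsum_le_tsum (norm_smul_le_of_bdd x hv) (summable_norm_smul_of_bdd x hv)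
      ((summable_norm_coord x).mul_right M)
  have h3 : ∑' η, ‖x η‖ * M = M * ‖x‖ := by
    rw [tsum_mul_right, norm_eq_tsum, mul_comm]
  linarith


/-- Evaluation at a coordinate as a continuous linear map. -/
def coordCLM (η : Γ) : ellOne Γ →L[ℝ] ℝ :=
  LinearMap.mkContinuous
    { toFun := fun x => x η
      map_add' := fun x y => rfl
      map_smul' := fun c x => rfl }
    1 (fun x => by
      show ‖x η‖ ≤ 1 * ‖x‖; rw [one_mul]; exact lp.norm_apply_le_norm one_ne_zero x η)

lemma coordCLM_apply (η : Γ) (x : ellOne Γ) : coordCLM η x = x η := rfl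

/-- The bounded operator determined by a uniformly bounded family of images of the
coordinate vectors. -/
def opOfFamily (v : Γ → ellOne Γ) (M : ℝ) (hM : 0 ≤ M) (hv : ∀ η, ‖v η‖ ≤ M) :
    ellOne Γ →L[ℝ] ellOne Γ :=
  LinearMap.mkContinuous
    { toFun := fun x => ∑' η, x η • v η
      map_add' := fun x y => by
        rw [← Summable.tsum_add (summable_smul_of_bdd x hv) (summable_smul_of_bdd y hv)]
        refine tsum_congr fun η => ?_
        rw [lp.coeFn_add, Pi.add_apply, add_smul]
      map_smul' := fun c x => by
        simp only [RingHom.id_apply]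
        rw [← Summable.tsum_const_smul c (summable_smul_of_bdd x hv)]
        refine tsum_congr fun η => ?_
        rw [lp.coeFn_smul, Pi.smul_apply, smul_smul]
        rfl }
    M (fun x => by
      simpa [mul_comm] using norm_tsum_smul_le x hv)

lemma opOfFamily_apply (v : Γ → ellOne Γ) (M : ℝ) (hM : 0 ≤ M) (hv : ∀ η, ‖v η‖ ≤ M)
    (x : ellOne Γ) : opOfFamily v M hM hv x = ∑' η, x η • v η := rfl

lemma opOfFamily_eVec (v : Γ → ellOne Γ) (M : ℝ) (hM : 0 ≤ M) (hv : ∀ η, ‖v η‖ ≤ M)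
    (γ : Γ) : opOfFamily v M hM hv (eVec γ) = v γ := by
  rw [opOfFamily_apply]
  rw [tsum_eq_single γ (fun η hη => by rw [eVec_apply_ne hη, zero_smul])]
  rw [eVec_apply_self, one_smul]

/-- Two bounded operators agree at `x` if they agree on all coordinate vectors in the
support of `x`. -/
lemma apply_eq_of_agree (T T' : ellOne Γ →L[ℝ] ellOne Γ) (x : ellOne Γ)
    (h : ∀ η, x η ≠ 0 → T (eVec η) = T' (eVec η)) : T x = T' x := by
  have h1 : HasSum (fun η => x η • T (eVec η)) (T x) := by
    have := (hasSum_coord_smul x).mapL T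
    refine this.congr_fun fun η => ?_
    rw [map_smul]
  have h2 : HasSum (fun η => x η • T' (eVec η)) (T' x) := by
    have := (hasSum_coord_smul x).mapL T'
    refine this.congr_fun fun η => ?_
    rw [map_smul]
  rw [← h1.tsum_eq, ← h2.tsum_eq]
  refine tsum_congr fun η => ?_
  by_cases hx : x η = 0
  · rw [hx, zero_smul, zero_smul]
  · rw [h η hx]

lemma apply_eq_tsum (T : ellOne Γ →L[ℝ] ellOne Γ) (x : ellOne Γ) :
    T x = ∑' η, x η • T (eVec η) := by
  have h1 : HasSum (fun η => x η • T (eVec η)) (T x) := by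
    have := (hasSum_coord_smul x).mapL T
    refine this.congr_fun fun η => ?_
    rw [map_smul]
  exact h1.tsum_eq.symm


section Construction

variable (D : BDData Γ)

lemma exists_rk (γ : Γ) : ∃ q, 1 ≤ q ∧ γ ∈ D.Δ q := by
  have h : γ ∈ ⋃ q ∈ {q : ℕ | 1 ≤ q}, D.Δ q := by
    rw [D.Δ_cover]; exact Set.mem_univ γ
  simpa [Set.mem_iUnion] using h

/-- The rank of `γ`: the unique `q ≥ 1` with `γ ∈ Δ_q`. -/
def rk (γ : Γ) : ℕ := (exists_rk D γ).choose

lemma one_le_rk (γ : Γ) : 1 ≤ rk D γ := (exists_rk D γ).choose_spec.1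

lemma mem_Δ_rk (γ : Γ) : γ ∈ D.Δ (rk D γ) := (exists_rk D γ).choose_spec.2

lemma rk_eq {γ : Γ} {q : ℕ} (hq : 1 ≤ q) (h : γ ∈ D.Δ q) : rk D γ = q := by
  by_contra hne
  exact Set.disjoint_left.1 (D.Δ_disjoint _ _ (one_le_rk D γ) hq hne) (mem_Δ_rk D γ) h

lemma mem_Gamma_iff {γ : Γ} {q : ℕ} :
    γ ∈ ⋃ r ∈ Set.Icc 1 q, D.Δ r ↔ rk D γ ≤ q := by
  simp only [Set.mem_iUnion, Set.mem_Icc, exists_prop]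
  constructor
  · rintro ⟨r, ⟨hr1, hrq⟩, hγ⟩
    rw [rk_eq D hr1 hγ]; exact hrq
  · intro h
    exact ⟨rk D γ, ⟨one_le_rk D γ, h⟩, mem_Δ_rk D γ⟩

/-- The uniform bound `1/(1-2θ)`. -/
def Mb : ℝ := (1 - 2 * D.θ)⁻¹

lemma Mb_denom_pos : 0 < 1 - 2 * D.θ := by
  have := D.θ_lt_half; linarith

lemma one_le_Mb : 1 ≤ Mb D := by
  rw [Mb]
  rw [le_inv_comm₀ one_pos (Mb_denom_pos D)]
  have := D.θ_pos; linarith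

lemma Mb_nonneg : 0 ≤ Mb D := le_trans zero_le_one (one_le_Mb D)

lemma Mb_eq : 1 + 2 * D.θ * Mb D = Mb D := by
  have h := Mb_denom_pos D
  rw [Mb]
  field_simp
  ring

/-- The family `P_q e_γ`, defined by recursion on the rank of `γ`. -/
def vAux (q : ℕ) (γ : Γ) : ellOne Γ :=
  if q = 0 then 0
  else if rk D γ ≤ q then eVec γ
  else
    match D.τ γ with
    | .type0 α ξ => α • (if h : rk D ξ < rk D γ then vAux q ξ else 0)
    | .type1 p β b =>
        β • ((∑' η, b η • (if h : rk D η < rk D γ then vAux q η else 0)) -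
             (∑' η, b η • (if h : rk D η < rk D γ then vAux (min p q) η else 0)))
    | .type2 α ξ p β b =>
        α • (if h : rk D ξ < rk D γ then vAux q ξ else 0) +
        β • ((∑' η, b η • (if h : rk D η < rk D γ then vAux q η else 0)) -
             (∑' η, b η • (if h : rk D η < rk D γ then vAux (min p q) η else 0)))
termination_by rk D γ

end Construction

end BD9

namespace BD9
variable {Γ : Type*} (D : BDData Γ)

/-- Guarded partial-sum operator used in the definition of `vAux`. -/
noncomputable def TT (q n : ℕ) (b : ellOne Γ) : ellOne Γ :=
  ∑' η, b η • (if _ : rk D η < n then vAux D q η else 0)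

lemma vAux_zero (γ : Γ) : vAux D 0 γ = 0 := by
  rw [vAux.eq_def]; simp

lemma vAux_le {q : ℕ} (hq : q ≠ 0) {γ : Γ} (h : rk D γ ≤ q) : vAux D q γ = eVec γ := by
  rw [vAux.eq_def]; simp [hq, h]

lemma vAux_gt0 {q : ℕ} {γ : Γ} {α : ℝ} {ξ : Γ} (hq : q ≠ 0) (h : ¬ rk D γ ≤ q)
    (hτ : D.τ γ = .type0 α ξ) :
    vAux D q γ = α • (if _ : rk D ξ < rk D γ then vAux D q ξ else 0) := by
  rw [vAux.eq_def]
  simp only [if_neg hq, if_neg h, hτ]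

lemma vAux_gt1 {q : ℕ} {γ : Γ} {p : ℕ} {β : ℝ} {b : ellOne Γ} (hq : q ≠ 0)
    (h : ¬ rk D γ ≤ q) (hτ : D.τ γ = .type1 p β b) :
    vAux D q γ = β • (TT D q (rk D γ) b - TT D (min p q) (rk D γ) b) := by
  rw [vAux.eq_def, TT, TT]
  simp only [if_neg hq, if_neg h, hτ]

lemma vAux_gt2 {q : ℕ} {γ : Γ} {α : ℝ} {ξ : Γ} {p : ℕ} {β : ℝ} {b : ellOne Γ} (hq : q ≠ 0)
    (h : ¬ rk D γ ≤ q) (hτ : D.τ γ = .type2 α ξ p β b) :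
    vAux D q γ = α • (if _ : rk D ξ < rk D γ then vAux D q ξ else 0) +
      β • (TT D q (rk D γ) b - TT D (min p q) (rk D γ) b) := by
  rw [vAux.eq_def, TT, TT]
  simp only [if_neg hq, if_neg h, hτ]

end BD9
namespace BD9
variable {Γ : Type*} (D : BDData Γ)

lemma norm_vAux_le (q : ℕ) (γ : Γ) : ‖vAux D q γ‖ ≤ Mb D := by
  suffices H : ∀ n, ∀ γ : Γ, rk D γ ≤ n → ∀ q, ‖vAux D q γ‖ ≤ Mb D from H _ γ le_rfl q
  intro n
  induction n using Nat.strong_induction_on with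
  | _ n IH =>
    intro γ hγ q
    rcases Nat.eq_zero_or_pos q with hq | hq
    · rw [hq, vAux_zero]
      simpa using Mb_nonneg D
    have hq0 : q ≠ 0 := hq.ne'
    by_cases hle : rk D γ ≤ q
    · rw [vAux_le D hq0 hle, norm_eVec]
      exact one_le_Mb D
    -- main case: `q < rk γ`, so `rk γ ≥ 2`
    have hrk2 : 2 ≤ rk D γ := by omega
    set m := rk D γ - 1 with hm
    have hrk : rk D γ = m + 1 := by omega
    have hm1 : 1 ≤ m := by omega
    have hmem : γ ∈ D.Δ (m + 1) := by rw [← hrk]; exact mem_Δ_rk D γ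
    have spec := D.τ_spec m hm1 γ hmem
    have hbdd : ∀ r (η : Γ),
        ‖(if _ : rk D η < rk D γ then vAux D r η else 0 : ellOne Γ)‖ ≤ Mb D := by
      intro r η
      by_cases hη : rk D η < rk D γ
      · rw [dif_pos hη]
        exact IH (rk D η) (by omega) η le_rfl r
      · rw [dif_neg hη]
        simpa using Mb_nonneg D
    have hTT : ∀ r (b : ellOne Γ), ‖TT D r (rk D γ) b‖ ≤ Mb D * ‖b‖ := fun r b =>
      norm_tsum_smul_le b (hbdd r)
    cases hτ : D.τ γ with
    | type0 α ξ =>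
      simp only [hτ] at spec
      obtain ⟨hα0, hα1, hξ⟩ := spec
      rw [vAux_gt0 D hq0 hle hτ, norm_smul, Real.norm_eq_abs, abs_of_nonneg hα0]
      calc α * ‖(if _ : rk D ξ < rk D γ then vAux D q ξ else 0 : ellOne Γ)‖
          ≤ 1 * Mb D := by
            exact mul_le_mul hα1 (hbdd q ξ) (norm_nonneg _) zero_le_one
        _ = Mb D := one_mul _
    | type1 p β b =>
      simp only [hτ] at spec
      obtain ⟨hp, hβ0, hβθ, hb, hsupp⟩ := spec
      rw [vAux_gt1 D hq0 hle hτ, norm_smul, Real.norm_eq_abs, abs_of_nonneg hβ0.le]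
      have hX := hTT q b
      have hY := hTT (min p q) b
      have hsub := norm_sub_le (TT D q (rk D γ) b) (TT D (min p q) (rk D γ) b)
      have hhalf := D.θ_lt_half
      have hM0 := Mb_nonneg D
      have hb0 : (0:ℝ) ≤ ‖b‖ := norm_nonneg _
      nlinarith [D.θ_pos, mul_le_mul_of_nonneg_left hb (Mb_nonneg D)]
    | type2 α ξ p β b =>
      simp only [hτ] at spec
      obtain ⟨hα0, hα1, hp1, hpm, hξ, hβ0, hβθ, hb, hsupp⟩ := spec
      rw [vAux_gt2 D hq0 hle hτ]
      have hrkξ : rk D ξ ≤ p := (mem_Gamma_iff D).1 hξ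
      have hξγ : rk D ξ < rk D γ := by omega
      rcases le_or_gt q p with hqp | hpq
      · -- `q ≤ p`: the second term vanishes
        rw [min_eq_right hqp, sub_self, smul_zero, add_zero, norm_smul,
          Real.norm_eq_abs, abs_of_nonneg hα0.le]
        calc α * ‖(if _ : rk D ξ < rk D γ then vAux D q ξ else 0 : ellOne Γ)‖
            ≤ 1 * Mb D := mul_le_mul hα1 (hbdd q ξ) (norm_nonneg _) zero_le_one
          _ = Mb D := one_mul _
      · -- `p < q`: then `vAux q ξ = e_ξ` has norm one
        rw [dif_pos hξγ, vAux_le D hq0 (by omega)]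
        have hX := hTT q b
        have hY := hTT (min p q) b
        have hsub := norm_sub_le (TT D q (rk D γ) b) (TT D (min p q) (rk D γ) b)
        have hhalf := D.θ_lt_half
        have hM0 := Mb_nonneg D
        have hMeq := Mb_eq D
        have h1 : ‖α • eVec ξ + β • (TT D q (rk D γ) b - TT D (min p q) (rk D γ) b)‖
            ≤ α * 1 + β * ‖TT D q (rk D γ) b - TT D (min p q) (rk D γ) b‖ := by
          refine le_trans (norm_add_le _ _) ?_
          rw [norm_smul, norm_smul, Real.norm_eq_abs, Real.norm_eq_abs,
            abs_of_nonneg hα0.le, abs_of_nonneg hβ0.le, norm_eVec]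
        have hb0 : (0:ℝ) ≤ ‖b‖ := norm_nonneg _
        nlinarith [D.θ_pos, mul_le_mul_of_nonneg_left hb (Mb_nonneg D)]

end BD9
namespace BD9
variable {Γ : Type*} (D : BDData Γ)

/-- The projections `P_q`. -/
noncomputable def Pop (q : ℕ) : ellOne Γ →L[ℝ] ellOne Γ :=
  opOfFamily (vAux D q) (Mb D) (Mb_nonneg D) (norm_vAux_le D q)

lemma Pop_apply (q : ℕ) (x : ellOne Γ) : Pop D q x = ∑' η, x η • vAux D q η := rfl

lemma Pop_eVec (q : ℕ) (γ : Γ) : Pop D q (eVec γ) = vAux D q γ :=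
  opOfFamily_eVec _ _ _ _ γ

lemma Pop_zero : Pop D 0 = 0 := by
  ext x
  rw [Pop_apply]
  simp [vAux_zero]

lemma Pop_eVec_of_le {q : ℕ} (hq : q ≠ 0) {γ : Γ} (h : rk D γ ≤ q) :
    Pop D q (eVec γ) = eVec γ := by
  rw [Pop_eVec, vAux_le D hq h]

/-- If `b` is supported on ranks `< n` then the guarded sum `TT` is just `Pop`. -/
lemma TT_eq_Pop {n : ℕ} {b : ellOne Γ} (hb : ∀ η, b η ≠ 0 → rk D η < n) (r : ℕ) :
    TT D r n b = Pop D r b := by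
  rw [TT, Pop_apply]
  refine tsum_congr fun η => ?_
  by_cases hη : b η = 0
  · rw [hη, zero_smul, zero_smul]
  · rw [dif_pos (hb η hη)]

/-- If `b` is supported on ranks `≤ q`, `q ≥ 1`, then `Pop q b = b`. -/
lemma Pop_eq_self {q : ℕ} (hq : q ≠ 0) {b : ellOne Γ} (hb : ∀ η, b η ≠ 0 → rk D η ≤ q) :
    Pop D q b = b := by
  rw [Pop_apply]
  have h2 : ∑' η, b η • vAux D q η = ∑' η, b η • eVec η := by
    refine tsum_congr fun η => ?_
    by_cases hη : b η = 0
    · rw [hη, zero_smul, zero_smul]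
    · rw [vAux_le D hq (hb η hη)]
  rw [h2, (hasSum_coord_smul b).tsum_eq]

end BD9
namespace BD9
variable {Γ : Type*} (D : BDData Γ)

lemma coord_smul (c : ℝ) (x : ellOne Γ) (η : Γ) : (c • x) η = c * x η := by
  rw [lp.coeFn_smul]; rfl

lemma coord_add (x y : ellOne Γ) (η : Γ) : (x + y) η = x η + y η := rfl

lemma coord_sub (x y : ellOne Γ) (η : Γ) : (x - y) η = x η - y η := rfl

lemma coord_zero (η : Γ) : (0 : ellOne Γ) η = 0 := rfl

lemma coord_tsum {f : Γ → ellOne Γ} (hf : Summable f) (η : Γ) :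
    (∑' i, f i) η = ∑' i, f i η :=
  (coordCLM η).map_tsum hf

lemma guard_bdd (r n : ℕ) :
    ∀ η : Γ, ‖(if _ : rk D η < n then vAux D r η else 0 : ellOne Γ)‖ ≤ Mb D := by
  intro η
  by_cases hη : rk D η < n
  · rw [dif_pos hη]; exact norm_vAux_le D r η
  · rw [dif_neg hη]; simpa using Mb_nonneg D

lemma summable_TT (r n : ℕ) (b : ellOne Γ) :
    Summable (fun η => b η • (if _ : rk D η < n then vAux D r η else 0 : ellOne Γ)) :=
  summable_smul_of_bdd b (guard_bdd D r n)

/-- `vAux q γ` is supported on ranks `≤ rk γ`. -/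
lemma vAux_coord_zero {γ η : Γ} (h : rk D γ < rk D η) (q : ℕ) : vAux D q γ η = 0 := by
  suffices H : ∀ n, ∀ γ : Γ, rk D γ ≤ n → ∀ q, ∀ η : Γ, rk D γ < rk D η →
      vAux D q γ η = 0 from H _ γ le_rfl q η h
  clear h q γ η
  intro n
  induction n using Nat.strong_induction_on with
  | _ n IH =>
    intro γ hγ q η h
    rcases Nat.eq_zero_or_pos q with hq | hq
    · rw [hq, vAux_zero]; rfl
    have hq0 : q ≠ 0 := hq.ne'
    by_cases hle : rk D γ ≤ q
    · rw [vAux_le D hq0 hle]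
      exact eVec_apply_ne (fun he => by rw [he] at h; omega)
    have hdite : ∀ (r : ℕ) (ξ : Γ),
        (if _ : rk D ξ < rk D γ then vAux D r ξ else 0 : ellOne Γ) η = 0 := by
      intro r ξ
      by_cases hξ : rk D ξ < rk D γ
      · rw [dif_pos hξ]
        exact IH (rk D ξ) (by omega) ξ le_rfl r η (by omega)
      · rw [dif_neg hξ]; rfl
    have hTT : ∀ (r : ℕ) (b : ellOne Γ), (TT D r (rk D γ) b) η = 0 := by
      intro r b
      rw [TT, coord_tsum (summable_TT D r (rk D γ) b)]
      have : ∀ ξ : Γ, (b ξ • (if _ : rk D ξ < rk D γ then vAux D r ξ else 0 : ellOne Γ)) η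
          = 0 := fun ξ => by rw [coord_smul, hdite r ξ, mul_zero]
      simp only [this, tsum_zero]
    cases hτ : D.τ γ with
    | type0 α ξ =>
      rw [vAux_gt0 D hq0 hle hτ, coord_smul, hdite q ξ, mul_zero]
    | type1 p β b =>
      rw [vAux_gt1 D hq0 hle hτ, coord_smul, coord_sub, hTT, hTT, sub_zero, mul_zero]
    | type2 α ξ p β b =>
      rw [vAux_gt2 D hq0 hle hτ, coord_add, coord_smul, coord_smul, hdite q ξ,
        coord_sub, hTT, hTT, sub_zero, mul_zero, mul_zero, add_zero]

end BD9
namespace BD9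
variable {Γ : Type*} (D : BDData Γ)

lemma min_ne_zero {s t : ℕ} (hs : s ≠ 0) (ht : t ≠ 0) : min s t ≠ 0 := by
  simp [Nat.min_eq_zero_iff, hs, ht]

lemma Pop_vAux (s t : ℕ) (γ : Γ) : Pop D t (vAux D s γ) = vAux D (min s t) γ := by
  suffices H : ∀ n, ∀ γ : Γ, rk D γ ≤ n → ∀ s t,
      Pop D t (vAux D s γ) = vAux D (min s t) γ from H _ γ le_rfl s t
  clear s t γ
  intro n
  induction n using Nat.strong_induction_on with
  | _ n IH =>
    intro γ hγ s t
    rcases Nat.eq_zero_or_pos t with ht | ht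
    · rw [ht, Pop_zero]
      simp [vAux_zero]
    rcases Nat.eq_zero_or_pos s with hs | hs
    · rw [hs, vAux_zero]
      simp [vAux_zero]
    have hs0 : s ≠ 0 := hs.ne'
    have ht0 : t ≠ 0 := ht.ne'
    have hst0 : min s t ≠ 0 := min_ne_zero hs0 ht0
    by_cases hle : rk D γ ≤ s
    · rw [vAux_le D hs0 hle, Pop_eVec]
      by_cases hlt : rk D γ ≤ t
      · rw [vAux_le D ht0 hlt, vAux_le D hst0 (le_min hle hlt)]
      · rw [min_eq_right (by omega : t ≤ s)]
    · -- `rk γ > s ≥ 1`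
      have hrk2 : 2 ≤ rk D γ := by omega
      set m := rk D γ - 1 with hm
      have hrk : rk D γ = m + 1 := by omega
      have hm1 : 1 ≤ m := by omega
      have hmem : γ ∈ D.Δ (m + 1) := by rw [← hrk]; exact mem_Δ_rk D γ
      have spec := D.τ_spec m hm1 γ hmem
      have hlemin : ¬ rk D γ ≤ min s t := by
        have := min_le_left s t; omega
      have hPP : ∀ (b : ellOne Γ), (∀ η, b η ≠ 0 → rk D η < rk D γ) → ∀ r u : ℕ,
          Pop D u (Pop D r b) = Pop D (min r u) b := by
        intro b hb r u
        rw [Pop_apply D r b,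
          (Pop D u).map_tsum (summable_smul_of_bdd b (fun η => norm_vAux_le D r η)),
          Pop_apply D (min r u) b]
        refine tsum_congr fun η => ?_
        by_cases hη : b η = 0
        · rw [hη, zero_smul, map_zero, zero_smul]
        · rw [map_smul, IH (rk D η) (by have := hb η hη; omega) η le_rfl r u]
      cases hτ : D.τ γ with
      | type0 α ξ =>
        simp only [hτ] at spec
        obtain ⟨hα0, hα1, hξ⟩ := spec
        have hξm : rk D ξ ≤ m := (mem_Gamma_iff D).1 hξ
        have hξγ : rk D ξ < rk D γ := by omega
        rw [vAux_gt0 D hs0 hle hτ, vAux_gt0 D hst0 hlemin hτ, dif_pos hξγ, dif_pos hξγ,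
          map_smul, IH (rk D ξ) (by omega) ξ le_rfl s t]
      | type1 p β b =>
        simp only [hτ] at spec
        obtain ⟨hp, hβ0, hβθ, hb, hsupp⟩ := spec
        have hbsup : ∀ η, b η ≠ 0 → rk D η < rk D γ := by
          intro η hη
          by_contra hcon
          refine hη (hsupp η fun hmem' => ?_)
          have := (mem_Gamma_iff D).1 hmem'.1
          omega
        rw [vAux_gt1 D hs0 hle hτ, vAux_gt1 D hst0 hlemin hτ,
          TT_eq_Pop D hbsup s, TT_eq_Pop D hbsup (min p s),
          TT_eq_Pop D hbsup (min s t), TT_eq_Pop D hbsup (min p (min s t)),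
          map_smul, map_sub, hPP b hbsup s t, hPP b hbsup (min p s) t]
        rw [min_assoc]
      | type2 α ξ p β b =>
        simp only [hτ] at spec
        obtain ⟨hα0, hα1, hp1, hpm, hξ, hβ0, hβθ, hb, hsupp⟩ := spec
        have hξp : rk D ξ ≤ p := (mem_Gamma_iff D).1 hξ
        have hξγ : rk D ξ < rk D γ := by omega
        have hbsup : ∀ η, b η ≠ 0 → rk D η < rk D γ := by
          intro η hη
          by_contra hcon
          refine hη (hsupp η fun hmem' => ?_)
          have := (mem_Gamma_iff D).1 hmem'.1
          omega
        rw [vAux_gt2 D hs0 hle hτ, vAux_gt2 D hst0 hlemin hτ, dif_pos hξγ, dif_pos hξγ,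
          TT_eq_Pop D hbsup s, TT_eq_Pop D hbsup (min p s),
          TT_eq_Pop D hbsup (min s t), TT_eq_Pop D hbsup (min p (min s t)),
          map_add, map_smul, map_smul, map_sub, hPP b hbsup s t, hPP b hbsup (min p s) t,
          IH (rk D ξ) (by omega) ξ le_rfl s t]
        rw [min_assoc]

lemma Pop_comp (s t : ℕ) (x : ellOne Γ) :
    Pop D t (Pop D s x) = Pop D (min s t) x := by
  rw [Pop_apply D s,
    (Pop D t).map_tsum (summable_smul_of_bdd x (fun η => norm_vAux_le D s η)),
    Pop_apply D (min s t)]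
  refine tsum_congr fun η => ?_
  rw [map_smul, Pop_vAux]

end BD9
namespace BD9
variable {Γ : Type*} (D : BDData Γ)

/-- The vector `c_γ`. -/
noncomputable def cB (γ : Γ) : ellOne Γ :=
  if rk D γ = 1 then 0 else
    match D.τ γ with
    | .type0 α ξ => α • eVec ξ
    | .type1 p β b => β • ((b : ellOne Γ) - Pop D p b)
    | .type2 α ξ p β b => α • eVec ξ + β • ((b : ellOne Γ) - Pop D p b)

/-- The vector `d_γ`. -/
noncomputable def dB (γ : Γ) : ellOne Γ := eVec γ - cB D γ

lemma eVec_sub_dB (γ : Γ) : eVec γ - dB D γ = cB D γ := sub_sub_cancel _ _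

/-- Facts extracted from `τ_spec` for an element of rank `≥ 2`, with the support
hypothesis reformulated via ranks. -/
lemma spec_of_rank {γ : Γ} (h : 2 ≤ rk D γ) :
    match D.τ γ with
    | .type0 α ξ => 0 ≤ α ∧ α ≤ 1 ∧ rk D ξ < rk D γ
    | .type1 p β b => p + 1 < rk D γ ∧ 0 < β ∧ β ≤ D.θ ∧ ‖b‖ ≤ 1 ∧
        (∀ η, b η ≠ 0 → rk D η < rk D γ)
    | .type2 α ξ p β b => 0 < α ∧ α ≤ 1 ∧ 1 ≤ p ∧ p + 1 < rk D γ ∧ rk D ξ ≤ p ∧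
        0 < β ∧ β ≤ D.θ ∧ ‖b‖ ≤ 1 ∧ (∀ η, b η ≠ 0 → rk D η < rk D γ) := by
  set m := rk D γ - 1 with hm
  have hrk : rk D γ = m + 1 := by omega
  have hm1 : 1 ≤ m := by omega
  have hmem : γ ∈ D.Δ (m + 1) := by rw [← hrk]; exact mem_Δ_rk D γ
  have spec := D.τ_spec m hm1 γ hmem
  cases hτ : D.τ γ with
  | type0 α ξ =>
    simp only [hτ] at spec ⊢
    obtain ⟨h1, h2, h3⟩ := spec
    exact ⟨h1, h2, by have := (mem_Gamma_iff D).1 h3; omega⟩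
  | type1 p β b =>
    simp only [hτ] at spec ⊢
    obtain ⟨h1, h2, h3, h4, h5⟩ := spec
    refine ⟨by omega, h2, h3, h4, fun η hη => ?_⟩
    by_contra hcon
    refine hη (h5 η fun hmem' => ?_)
    have := (mem_Gamma_iff D).1 hmem'.1
    omega
  | type2 α ξ p β b =>
    simp only [hτ] at spec ⊢
    obtain ⟨h1, h2, h3, h4, h5, h6, h7, h8, h9⟩ := spec
    refine ⟨h1, h2, h3, by omega, (mem_Gamma_iff D).1 h5, h6, h7, h8, fun η hη => ?_⟩
    by_contra hcon
    refine hη (h9 η fun hmem' => ?_)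
    have := (mem_Gamma_iff D).1 hmem'.1
    omega

lemma Pop_cB_of_gt {q : ℕ} (hq : q ≠ 0) {γ : Γ} (h : ¬ rk D γ ≤ q) :
    Pop D q (cB D γ) = vAux D q γ := by
  have hrk2 : 2 ≤ rk D γ := by have := one_le_rk D γ; omega
  have h1 : rk D γ ≠ 1 := by omega
  have spec := spec_of_rank D hrk2
  cases hτ : D.τ γ with
  | type0 α ξ =>
    simp only [hτ] at spec
    obtain ⟨hα0, hα1, hξγ⟩ := spec
    rw [cB, if_neg h1]
    simp only [hτ]
    rw [map_smul, Pop_eVec, vAux_gt0 D hq h hτ, dif_pos hξγ]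
  | type1 p β b =>
    simp only [hτ] at spec
    obtain ⟨hp, hβ0, hβθ, hb, hbsup⟩ := spec
    rw [cB, if_neg h1]
    simp only [hτ]
    rw [map_smul, map_sub, Pop_comp, vAux_gt1 D hq h hτ,
      TT_eq_Pop D hbsup q, TT_eq_Pop D hbsup (min p q)]
  | type2 α ξ p β b =>
    simp only [hτ] at spec
    obtain ⟨hα0, hα1, hp1, hpγ, hξp, hβ0, hβθ, hb, hbsup⟩ := spec
    have hξγ : rk D ξ < rk D γ := by omega
    rw [cB, if_neg h1]
    simp only [hτ]
    rw [map_add, map_smul, map_smul, map_sub, Pop_comp, Pop_eVec,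
      vAux_gt2 D hq h hτ, dif_pos hξγ,
      TT_eq_Pop D hbsup q, TT_eq_Pop D hbsup (min p q)]

lemma Pop_cB_of_le {q : ℕ} (hq : q ≠ 0) {γ : Γ} (h : rk D γ ≤ q) :
    Pop D q (cB D γ) = cB D γ := by
  by_cases h1 : rk D γ = 1
  · rw [cB, if_pos h1, map_zero]
  have hrk2 : 2 ≤ rk D γ := by have := one_le_rk D γ; omega
  have spec := spec_of_rank D hrk2
  cases hτ : D.τ γ with
  | type0 α ξ =>
    simp only [hτ] at spec
    obtain ⟨hα0, hα1, hξγ⟩ := spec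
    rw [cB, if_neg h1]
    simp only [hτ]
    rw [map_smul, Pop_eVec, vAux_le D hq (by omega)]
  | type1 p β b =>
    simp only [hτ] at spec
    obtain ⟨hp, hβ0, hβθ, hb, hbsup⟩ := spec
    rw [cB, if_neg h1]
    simp only [hτ]
    rw [map_smul, map_sub, Pop_comp, min_eq_left (by omega : p ≤ q),
      Pop_eq_self D hq (fun η hη => by have := hbsup η hη; omega)]
  | type2 α ξ p β b =>
    simp only [hτ] at spec
    obtain ⟨hα0, hα1, hp1, hpγ, hξp, hβ0, hβθ, hb, hbsup⟩ := spec
    rw [cB, if_neg h1]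
    simp only [hτ]
    rw [map_add, map_smul, map_smul, map_sub, Pop_comp, Pop_eVec,
      min_eq_left (by omega : p ≤ q), vAux_le D hq (by omega),
      Pop_eq_self D hq (fun η hη => by have := hbsup η hη; omega)]

lemma Pop_dB_of_le {q : ℕ} (hq : q ≠ 0) {γ : Γ} (h : rk D γ ≤ q) :
    Pop D q (dB D γ) = dB D γ := by
  rw [dB, map_sub, Pop_eVec, vAux_le D hq h, Pop_cB_of_le D hq h]

lemma Pop_dB_of_gt {q : ℕ} (hq : q ≠ 0) {γ : Γ} (h : ¬ rk D γ ≤ q) :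
    Pop D q (dB D γ) = 0 := by
  rw [dB, map_sub, Pop_eVec, Pop_cB_of_gt D hq h, sub_self]

end BD9
namespace BD9
variable {Γ : Type*} (D : BDData Γ)

theorem admissible_dB_Pop : Admissible D (dB D) (Pop D) := by
  refine ⟨Pop_zero D, fun q hq γ => ⟨fun hmem => ?_, fun hmem => ?_⟩, fun γ hγ => ?_,
    fun q hq γ hγ => ?_⟩
  · exact Pop_dB_of_le D (by omega) ((mem_Gamma_iff D).1 hmem)
  · exact Pop_dB_of_gt D (by omega) (fun hc => hmem ((mem_Gamma_iff D).2 hc))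
  · rw [eVec_sub_dB, cB, if_pos (rk_eq D le_rfl hγ)]
  · have hrk : rk D γ = q + 1 := rk_eq D (by omega) hγ
    have h1 : rk D γ ≠ 1 := by omega
    rw [eVec_sub_dB]
    cases hτ : D.τ γ <;> simp only [cB, if_neg h1, hτ]

lemma Pop_coord_zero {b : ellOne Γ} {n : ℕ} (hb : ∀ η', b η' ≠ 0 → rk D η' ≤ n) {η : Γ}
    (hn : n < rk D η) (p : ℕ) : (Pop D p b) η = 0 := by
  rw [Pop_apply, coord_tsum (summable_smul_of_bdd b (fun η' => norm_vAux_le D p η'))]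
  have : ∀ η' : Γ, (b η' • vAux D p η') η = 0 := by
    intro η'
    by_cases hη' : b η' = 0
    · rw [hη', zero_smul]; rfl
    · rw [coord_smul, vAux_coord_zero D (by have := hb η' hη'; omega), mul_zero]
  simp only [this, tsum_zero]

lemma cB_coord_zero {γ η : Γ} (h : rk D γ ≤ rk D η) : cB D γ η = 0 := by
  by_cases h1 : rk D γ = 1
  · rw [cB, if_pos h1]; rfl
  have hrk2 : 2 ≤ rk D γ := by have := one_le_rk D γ; omega
  have spec := spec_of_rank D hrk2
  cases hτ : D.τ γ with
  | type0 α ξ =>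
    simp only [hτ] at spec
    obtain ⟨hα0, hα1, hξγ⟩ := spec
    rw [cB, if_neg h1]
    simp only [hτ]
    rw [coord_smul, eVec_apply_ne (fun he => by rw [he] at h; omega), mul_zero]
  | type1 p β b =>
    simp only [hτ] at spec
    obtain ⟨hp, hβ0, hβθ, hb, hbsup⟩ := spec
    rw [cB, if_neg h1]
    simp only [hτ]
    rw [coord_smul, coord_sub,
      Pop_coord_zero D (n := rk D γ - 1) (fun η' hη' => by have := hbsup η' hη'; omega)
        (by omega) p]
    have hbη : b η = 0 := by
      by_contra hc
      have := hbsup η hc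
      omega
    rw [hbη, sub_zero, mul_zero]
  | type2 α ξ p β b =>
    simp only [hτ] at spec
    obtain ⟨hα0, hα1, hp1, hpγ, hξp, hβ0, hβθ, hb, hbsup⟩ := spec
    rw [cB, if_neg h1]
    simp only [hτ]
    rw [coord_add, coord_smul, coord_smul, coord_sub,
      eVec_apply_ne (fun he => by rw [he] at h; omega),
      Pop_coord_zero D (n := rk D γ - 1) (fun η' hη' => by have := hbsup η' hη'; omega)
        (by omega) p]
    have hbη : b η = 0 := by
      by_contra hc
      have := hbsup η hc
      omega
    rw [hbη, sub_zero, mul_zero, mul_zero, add_zero]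

end BD9
namespace BD9
variable {Γ : Type*} (D : BDData Γ)

theorem unique_aux {d' : Γ → ellOne Γ} {P' : ℕ → ellOne Γ →L[ℝ] ellOne Γ}
    (h' : Admissible D d' P') :
    ∀ n, ∀ γ : Γ, rk D γ ≤ n →
      d' γ = dB D γ ∧ ∀ q, P' q (eVec γ) = Pop D q (eVec γ) := by
  obtain ⟨h0, hA, hB1, hB⟩ := h'
  intro n
  induction n using Nat.strong_induction_on with
  | _ n IH =>
    intro γ hγ
    have hc : eVec γ - d' γ = cB D γ := by
      by_cases h1 : rk D γ = 1
      · rw [hB1 γ (by rw [← h1]; exact mem_Δ_rk D γ), cB, if_pos h1]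
      · have hrk2 : 2 ≤ rk D γ := by have := one_le_rk D γ; omega
        set m := rk D γ - 1 with hm
        have hrk : rk D γ = m + 1 := by omega
        have hm1 : 1 ≤ m := by omega
        have hmem : γ ∈ D.Δ (m + 1) := by rw [← hrk]; exact mem_Δ_rk D γ
        have hB' := hB m hm1 γ hmem
        have spec := spec_of_rank D hrk2
        rw [hB']
        cases hτ : D.τ γ with
        | type0 α ξ => simp only [hτ, cB, if_neg h1]
        | type1 p β b =>
          simp only [hτ] at spec
          obtain ⟨hp, hβ0, hβθ, hb, hbsup⟩ := spec
          simp only [hτ, cB, if_neg h1]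
          have hP : P' p b = Pop D p b := by
            refine apply_eq_of_agree _ _ b fun η hη => ?_
            have hrη := hbsup η hη
            exact (IH (rk D η) (by omega) η le_rfl).2 p
          rw [hP]
        | type2 α ξ p β b =>
          simp only [hτ] at spec
          obtain ⟨hα0, hα1, hp1, hpγ, hξp, hβ0, hβθ, hb, hbsup⟩ := spec
          simp only [hτ, cB, if_neg h1]
          have hP : P' p b = Pop D p b := by
            refine apply_eq_of_agree _ _ b fun η hη => ?_
            have hrη := hbsup η hη
            exact (IH (rk D η) (by omega) η le_rfl).2 p
          rw [hP]
    have hd : d' γ = dB D γ := by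
      rw [← sub_sub_cancel (eVec γ) (d' γ), hc, dB]
    refine ⟨hd, fun q => ?_⟩
    rcases Nat.eq_zero_or_pos q with hq | hq
    · rw [hq, h0, Pop_zero]
    have hq1 : 1 ≤ q := hq
    have hq0 : q ≠ 0 := by omega
    have he : eVec γ = d' γ + cB D γ := by rw [← hc]; abel
    have hPc : P' q (cB D γ) = Pop D q (cB D γ) := by
      refine apply_eq_of_agree _ _ _ fun η hη => ?_
      have hrη : rk D η < rk D γ := by
        by_contra hcon
        exact hη (cB_coord_zero D (by omega))
      exact (IH (rk D η) (by omega) η le_rfl).2 q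
    have hPd : P' q (d' γ) = Pop D q (dB D γ) := by
      by_cases hle : rk D γ ≤ q
      · rw [(hA q hq1 γ).1 ((mem_Gamma_iff D).2 hle), Pop_dB_of_le D hq0 hle, hd]
      · rw [(hA q hq1 γ).2 (fun hmem => hle ((mem_Gamma_iff D).1 hmem)),
          Pop_dB_of_gt D hq0 hle]
    calc P' q (eVec γ) = P' q (d' γ) + P' q (cB D γ) := by rw [← map_add, ← he]
      _ = Pop D q (dB D γ) + Pop D q (cB D γ) := by rw [hPd, hPc]
      _ = Pop D q (eVec γ) := by
          rw [← map_add]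
          congr 1
          rw [dB]
          abel

theorem bd_exists_unique :
    ∃! dP : (Γ → ellOne Γ) × (ℕ → ellOne Γ →L[ℝ] ellOne Γ),
      Admissible D dP.1 dP.2 := by
  refine ⟨⟨dB D, Pop D⟩, admissible_dB_Pop D, ?_⟩
  rintro ⟨d', P'⟩ h'
  have key := unique_aux D h'
  refine Prod.ext ?_ ?_
  · funext γ
    exact (key (rk D γ) γ le_rfl).1
  · funext q
    refine ContinuousLinearMap.ext fun x => ?_
    exact apply_eq_of_agree _ _ x fun η _ => (key (rk D η) η le_rfl).2 q

end BD9

theorem stmt9 {Γ : Type*} (D : BDData Γ) :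
    ∃! dP : (Γ → ellOne Γ) × (ℕ → ellOne Γ →L[ℝ] ellOne Γ),
      Admissible D dP.1 dP.2 := BD9.bd_exists_unique D
end
end

section
/- Under the stated Bourgain–Delbaen assumptions, if ((d_γ)_{γ∈Γ}, (P_q)_{q≥0}) is an admissible pair of families, then for every q the operator norm of P_q on ℓ¹(Γ) is at most (1 − 2θ)⁻¹. -/
noncomputable section

namespace BDAux

variable {Γ : Type*}

/-- `Γ_q`. -/
abbrev Gq (D : BDData Γ) (q : ℕ) : Set Γ := ⋃ r ∈ Set.Icc 1 q, D.Δ r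

lemma mem_Gq_iff {D : BDData Γ} {q : ℕ} {γ : Γ} :
    γ ∈ Gq D q ↔ ∃ r, (1 ≤ r ∧ r ≤ q) ∧ γ ∈ D.Δ r := by
  simp [Gq, Set.mem_Icc]

lemma mem_Gq_of {D : BDData Γ} {s q : ℕ} {γ : Γ} (hγ : γ ∈ D.Δ s) (h1 : 1 ≤ s)
    (hsq : s ≤ q) : γ ∈ Gq D q :=
  mem_Gq_iff.2 ⟨s, ⟨h1, hsq⟩, hγ⟩

lemma notMem_Gq {D : BDData Γ} {s q : ℕ} {γ : Γ} (hγ : γ ∈ D.Δ s) (hqs : q < s) :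
    γ ∉ Gq D q := by
  intro hm
  rcases mem_Gq_iff.1 hm with ⟨r, ⟨h1, hrq⟩, hγr⟩
  exact Set.disjoint_left.1 (D.Δ_disjoint r s h1 (by omega) (by omega)) hγr hγ

lemma Gq_mono {D : BDData Γ} {q q' : ℕ} (hq : q ≤ q') : Gq D q ⊆ Gq D q' := by
  intro γ hγ
  rcases mem_Gq_iff.1 hγ with ⟨r, ⟨h1, hrq⟩, hγr⟩
  exact mem_Gq_of hγr h1 (hrq.trans hq)

lemma Gq_finite (D : BDData Γ) (q : ℕ) : (Gq D q).Finite :=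
  Set.Finite.biUnion (Set.finite_Icc 1 q) fun r hr => D.Δ_finite r hr.1

lemma exists_rank (D : BDData Γ) (γ : Γ) : ∃ r, 1 ≤ r ∧ γ ∈ D.Δ r := by
  have h : γ ∈ ⋃ q ∈ {q : ℕ | 1 ≤ q}, D.Δ q := D.Δ_cover ▸ Set.mem_univ γ
  simpa [Set.mem_iUnion] using h

/-- The span of `{d_η : η ∈ Γ_q}`. -/
abbrev Vq (D : BDData Γ) (d : Γ → ellOne Γ) (q : ℕ) : Submodule ℝ (ellOne Γ) :=
  Submodule.span ℝ (d '' Gq D q)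

variable {D : BDData Γ} {d : Γ → ellOne Γ} {P : ℕ → ellOne Γ →L[ℝ] ellOne Γ}

lemma Vq_mono (h : Admissible D d P) {q q' : ℕ} (hq : q ≤ q') : Vq D d q ≤ Vq D d q' :=
  Submodule.span_mono (Set.image_mono (Gq_mono hq))

lemma P_fix (h : Admissible D d P) (q : ℕ) {x : ellOne Γ} (hx : x ∈ Vq D d q) :
    P q x = x := by
  induction hx using Submodule.span_induction with
  | mem x hx =>
    rcases hx with ⟨η, hη, rfl⟩
    rcases mem_Gq_iff.1 hη with ⟨r, ⟨h1, hrq⟩, _⟩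
    exact (h.2.1 q (h1.trans hrq) η).1 hη
  | zero => simp
  | add x y _ _ hx hy => rw [map_add, hx, hy]
  | smul a x _ hx => rw [map_smul, hx]

lemma P_maps (h : Admissible D d P) (r p : ℕ) {x : ellOne Γ} (hx : x ∈ Vq D d r) :
    P p x ∈ Vq D d r := by
  induction hx using Submodule.span_induction with
  | mem x hx =>
    rcases hx with ⟨η, hη, rfl⟩
    rcases Nat.eq_zero_or_pos p with rfl | hp
    · rw [h.1]; simp
    · by_cases hmem : η ∈ Gq D p
      · rw [(h.2.1 p hp η).1 hmem]
        exact Submodule.subset_span ⟨η, hη, rfl⟩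
      · rw [(h.2.1 p hp η).2 hmem]
        exact Submodule.zero_mem _
  | zero => simp
  | add x y _ _ hx hy => rw [map_add]; exact Submodule.add_mem _ hx hy
  | smul a x _ hx => rw [map_smul]; exact Submodule.smul_mem _ _ hx

lemma P_comp_le (h : Admissible D d P) {p q : ℕ} (hqp : q ≤ p) (r : ℕ) {x : ellOne Γ}
    (hx : x ∈ Vq D d r) : P q (P p x) = P q x := by
  induction hx using Submodule.span_induction with
  | mem x hx =>
    rcases hx with ⟨η, hη, rfl⟩
    rcases Nat.eq_zero_or_pos q with rfl | hq
    · rw [h.1]; simp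
    · have hp : 1 ≤ p := hq.trans_le hqp
      by_cases hmem : η ∈ Gq D p
      · rw [(h.2.1 p hp η).1 hmem]
      · rw [(h.2.1 p hp η).2 hmem, map_zero,
          (h.2.1 q hq η).2 (fun hc => hmem (Gq_mono hqp hc))]
  | zero => simp
  | add x y _ _ hx hy => simp only [map_add]; rw [hx, hy]
  | smul a x _ hx => simp only [map_smul]; rw [hx]

lemma P_comp_ge (h : Admissible D d P) {p q : ℕ} (hpq : p ≤ q) (r : ℕ) {x : ellOne Γ}
    (hx : x ∈ Vq D d r) : P q (P p x) = P p x := by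
  induction hx using Submodule.span_induction with
  | mem x hx =>
    rcases hx with ⟨η, hη, rfl⟩
    rcases Nat.eq_zero_or_pos p with rfl | hp
    · rw [h.1]; simp
    · have hq : 1 ≤ q := hp.trans_le hpq
      by_cases hmem : η ∈ Gq D p
      · rw [(h.2.1 p hp η).1 hmem, (h.2.1 q hq η).1 (Gq_mono hpq hmem)]
      · rw [(h.2.1 p hp η).2 hmem, map_zero]
  | zero => simp
  | add x y _ _ hx hy => simp only [map_add]; rw [hx, hy]
  | smul a x _ hx => simp only [map_smul]; rw [hx]

lemma single_eq_smul_eVec (γ : Γ) (a : ℝ) :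
    (letI := Classical.decEq Γ; lp.single (E := fun _ : Γ => ℝ) 1 γ a) = a • eVec γ := by
  letI := Classical.decEq Γ
  rw [eVec, ← lp.single_smul]
  norm_num

lemma mem_span_eVec {S : Set Γ} (hS : S.Finite) (f : ellOne Γ)
    (hf : ∀ γ, f γ ≠ 0 → γ ∈ S) :
    f ∈ Submodule.span ℝ (eVec '' S) := by
  letI := Classical.decEq Γ
  haveI : Fact ((1 : ENNReal) ≤ 1) := ⟨le_refl _⟩
  have hsum := lp.hasSum_single (E := fun _ : Γ => ℝ) (p := 1) (by simp) f
  set W := Submodule.span ℝ (eVec '' S) with hW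
  haveI hfd : FiniteDimensional ℝ W := FiniteDimensional.span_of_finite ℝ (hS.image _)
  have hcl : IsClosed (W : Set (ellOne Γ)) := Submodule.closed_of_finiteDimensional W
  have hmem : ∀ γ : Γ, lp.single (E := fun _ : Γ => ℝ) 1 γ (f γ) ∈ W := by
    intro γ
    rw [single_eq_smul_eVec]
    by_cases hγ : f γ = 0
    · rw [hγ, zero_smul]; exact Submodule.zero_mem _
    · exact Submodule.smul_mem _ _ (Submodule.subset_span ⟨γ, hf γ hγ, rfl⟩)
  exact hcl.mem_of_tendsto hsum
    (Filter.Eventually.of_forall fun s => Submodule.sum_mem W fun γ _ => hmem γ)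

lemma norm_eVec (γ : Γ) : ‖(eVec γ : ellOne Γ)‖ = 1 := by
  letI := Classical.decEq Γ
  have := lp.norm_single (E := fun _ : Γ => ℝ) (p := 1) (by norm_num) γ (1 : ℝ)
  simpa [eVec] using this

lemma norm_eq_tsum (f : ellOne Γ) : ‖f‖ = ∑' γ, ‖f γ‖ := by
  have := lp.norm_eq_tsum_rpow (E := fun _ : Γ => ℝ) (p := 1) (by norm_num) f
  simpa using this

lemma summable_norm (f : ellOne Γ) : Summable fun γ : Γ => ‖f γ‖ := by
  have := (lp.memℓp f).summable (p := 1) (by norm_num)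
  simpa using this

lemma opNorm_aux (T : ellOne Γ →L[ℝ] ellOne Γ) (C : ℝ) (hC : 0 ≤ C) (f : ellOne Γ)
    (hf : ∀ γ, f γ ≠ 0 → ‖T (eVec γ)‖ ≤ C) : ‖T f‖ ≤ C * ‖f‖ := by
  letI := Classical.decEq Γ
  haveI : Fact ((1 : ENNReal) ≤ 1) := ⟨le_refl _⟩
  have hsum := lp.hasSum_single (E := fun _ : Γ => ℝ) (p := 1) (by simp) f
  have hT : HasSum (fun γ : Γ => f γ • T (eVec γ)) (T f) := by
    have := T.hasSum hsum
    simpa only [single_eq_smul_eVec, map_smul] using this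
  have key : ∀ γ : Γ, ‖f γ • T (eVec γ)‖ ≤ ‖f γ‖ * C := by
    intro γ
    by_cases hγ : f γ = 0
    · simp [hγ]
    · rw [norm_smul]
      exact mul_le_mul_of_nonneg_left (hf γ hγ) (norm_nonneg _)
  have hsumm : Summable fun γ : Γ => ‖f γ • T (eVec γ)‖ :=
    Summable.of_nonneg_of_le (fun _ => norm_nonneg _) key ((summable_norm f).mul_right C)
  calc ‖T f‖ = ‖∑' γ : Γ, f γ • T (eVec γ)‖ := by rw [hT.tsum_eq]
    _ ≤ ∑' γ : Γ, ‖f γ • T (eVec γ)‖ := norm_tsum_le_tsum_norm hsumm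
    _ ≤ ∑' γ : Γ, ‖f γ‖ * C := hsumm.tsum_le_tsum key ((summable_norm f).mul_right C)
    _ = (∑' γ : Γ, ‖f γ‖) * C := by rw [tsum_mul_right]
    _ = C * ‖f‖ := by rw [norm_eq_tsum, mul_comm]

lemma eVec_mem (h : Admissible D d P) : ∀ r, ∀ γ ∈ Gq D r, eVec γ ∈ Vq D d r := by
  intro r
  induction r using Nat.strong_induction_on with
  | _ r IH =>
    intro γ hγ
    rcases mem_Gq_iff.1 hγ with ⟨t, ⟨h1t, htr⟩, hγt⟩
    rcases htr.lt_or_eq with hlt | rfl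
    · exact Vq_mono h hlt.le (IH t hlt γ (mem_Gq_of hγt h1t le_rfl))
    · obtain ⟨s, rfl⟩ : ∃ s, t = s + 1 := ⟨t - 1, by omega⟩
      rcases Nat.eq_zero_or_pos s with rfl | hs
      · have hd : eVec γ = d γ := sub_eq_zero.1 (h.2.2.1 γ hγt)
        rw [hd]; exact Submodule.subset_span ⟨γ, hγ, rfl⟩
      · have hB := h.2.2.2 s hs γ hγt
        have hspec := D.τ_spec s hs γ hγt
        have hdmem : d γ ∈ Vq D d (s + 1) := Submodule.subset_span ⟨γ, hγ, rfl⟩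
        have hEq : eVec γ = d γ + (eVec γ - d γ) := by abel
        rw [hEq]
        refine Submodule.add_mem _ hdmem ?_
        cases hτ : D.τ γ with
        | type0 α ξ =>
          simp only [hτ] at hB hspec
          rw [hB]
          exact Submodule.smul_mem _ _
            (Vq_mono h (Nat.le_succ s) (IH s (Nat.lt_succ_self s) ξ hspec.2.2))
        | type1 p β b =>
          simp only [hτ] at hB hspec
          obtain ⟨hps, hβ0, hβθ, hbn, hbs⟩ := hspec
          have hbV : (b : ellOne Γ) ∈ Vq D d s := by
            have h1 : (b : ellOne Γ) ∈ Submodule.span ℝ (eVec '' Gq D s) :=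
              mem_span_eVec (Gq_finite D s) b (fun γ' hne => by
                by_contra hc
                exact hne (hbs γ' fun hm => hc hm.1))
            exact (Submodule.span_le.2 (by
              rintro _ ⟨γ', hγ', rfl⟩
              exact IH s (Nat.lt_succ_self s) γ' hγ')) h1
          rw [hB]
          exact Submodule.smul_mem _ _
            (Vq_mono h (Nat.le_succ s) (Submodule.sub_mem _ hbV (P_maps h s p hbV)))
        | type2 α ξ p β b =>
          simp only [hτ] at hB hspec
          obtain ⟨hα0, hα1, h1p, hps, hξ, hβ0, hβθ, hbn, hbs⟩ := hspec
          have hbV : (b : ellOne Γ) ∈ Vq D d s := by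
            have h1 : (b : ellOne Γ) ∈ Submodule.span ℝ (eVec '' Gq D s) :=
              mem_span_eVec (Gq_finite D s) b (fun γ' hne => by
                by_contra hc
                exact hne (hbs γ' fun hm => hc hm.1))
            exact (Submodule.span_le.2 (by
              rintro _ ⟨γ', hγ', rfl⟩
              exact IH s (Nat.lt_succ_self s) γ' hγ')) h1
          rw [hB]
          refine Submodule.add_mem _ ?_ ?_
          · exact Submodule.smul_mem _ _
              (Vq_mono h (Nat.le_succ s) (IH s (Nat.lt_succ_self s) ξ (Gq_mono hps.le hξ)))
          · exact Submodule.smul_mem _ _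
              (Vq_mono h (Nat.le_succ s) (Submodule.sub_mem _ hbV (P_maps h s p hbV)))

lemma b_mem (h : Admissible D d P) {s : ℕ} (b : ellOne Γ)
    (hb : ∀ γ', b γ' ≠ 0 → γ' ∈ Gq D s) : (b : ellOne Γ) ∈ Vq D d s := by
  have h1 : (b : ellOne Γ) ∈ Submodule.span ℝ (eVec '' Gq D s) :=
    mem_span_eVec (Gq_finite D s) b hb
  exact (Submodule.span_le.2 (by
    rintro _ ⟨γ', hγ', rfl⟩
    exact eVec_mem h s γ' hγ')) h1

set_option maxHeartbeats 1000000 in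
lemma main_est (h : Admissible D d P) :
    ∀ r, 1 ≤ r → ∀ γ ∈ D.Δ r, ∀ q, ‖P q (eVec γ)‖ ≤ (1 - 2 * D.θ)⁻¹ := by
  have hθh := D.θ_lt_half
  have hθp := D.θ_pos
  have hpos : 0 < 1 - 2 * D.θ := by linarith
  set lam := (1 - 2 * D.θ)⁻¹ with hlamdef
  have hlampos : 0 < lam := inv_pos.2 hpos
  have hprod : lam * (1 - 2 * D.θ) = 1 := inv_mul_cancel₀ hpos.ne'
  have hθlam : 0 ≤ D.θ * lam := mul_nonneg hθp.le hlampos.le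
  have hkey : 1 + 2 * (D.θ * lam) = lam := by nlinarith
  have hlam1 : 1 ≤ lam := by nlinarith
  intro r
  induction r using Nat.strong_induction_on with
  | _ r IH =>
    intro hr γ hγ q
    have Hb : ∀ s, s < r → ∀ b : ellOne Γ, (∀ γ', b γ' ≠ 0 → γ' ∈ Gq D s) →
        ∀ q', ‖P q' b‖ ≤ lam * ‖b‖ := by
      intro s hs b hb q'
      refine opNorm_aux (P q') lam hlampos.le b ?_
      intro γ' hne
      rcases mem_Gq_iff.1 (hb γ' hne) with ⟨u, ⟨h1u, hus⟩, hγ'u⟩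
      exact IH u (by omega) h1u γ' hγ'u q'
    rcases Nat.eq_zero_or_pos q with rfl | hq
    · rw [h.1]; simpa using hlampos.le
    rcases le_or_gt r q with hrq | hqr
    · rw [P_fix h q (eVec_mem h q γ (mem_Gq_of hγ hr hrq)), norm_eVec]
      exact hlam1
    · obtain ⟨s, rfl⟩ : ∃ s, r = s + 1 := ⟨r - 1, by omega⟩
      have hγq : γ ∉ Gq D q := notMem_Gq hγ hqr
      have hPd : P q (d γ) = 0 := (h.2.1 q hq γ).2 hγq
      have hsplit : P q (eVec γ) = P q (eVec γ - d γ) := by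
        rw [map_sub, hPd, sub_zero]
      rcases Nat.eq_zero_or_pos s with rfl | hs
      · rw [hsplit, h.2.2.1 γ hγ, map_zero, norm_zero]; exact hlampos.le
      · have hB := h.2.2.2 s hs γ hγ
        have hspec := D.τ_spec s hs γ hγ
        cases hτ : D.τ γ with
        | type0 α ξ =>
          simp only [hτ] at hB hspec
          obtain ⟨hα0, hα1, hξ⟩ := hspec
          rcases mem_Gq_iff.1 (show ξ ∈ Gq D s from hξ) with ⟨u, ⟨h1u, hus⟩, hξu⟩
          have hP := IH u (by omega) h1u ξ hξu q
          rw [hsplit, hB, map_smul, norm_smul]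
          calc ‖α‖ * ‖P q (eVec ξ)‖ ≤ 1 * lam :=
                mul_le_mul (by rw [Real.norm_eq_abs, abs_of_nonneg hα0]; exact hα1) hP
                  (norm_nonneg _) zero_le_one
            _ = lam := one_mul lam
        | type1 p β b =>
          simp only [hτ] at hB hspec
          obtain ⟨hps, hβ0, hβθ, hbn, hbs⟩ := hspec
          have hbsupp : ∀ γ', b γ' ≠ 0 → γ' ∈ Gq D s := fun γ' hne => by
            by_contra hc
            exact hne (hbs γ' fun hm => hc hm.1)
          have hbV : (b : ellOne Γ) ∈ Vq D d s := b_mem h b hbsupp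
          rw [hsplit, hB, map_smul]
          rcases le_or_gt q p with hqp | hpq
          · have hz : P q ((b : ellOne Γ) - P p b) = 0 := by
              rw [map_sub, P_comp_le h hqp s hbV, sub_self]
            rw [hz, smul_zero, norm_zero]; exact hlampos.le
          · have h1 := Hb s (by omega) b hbsupp q
            have h2 := Hb s (by omega) b hbsupp p
            have hz : P q ((b : ellOne Γ) - P p b) = P q b - P p b := by
              rw [map_sub, P_comp_ge h hpq.le s hbV]
            rw [hz, norm_smul, Real.norm_eq_abs, abs_of_pos hβ0]
            have hbnn : (0:ℝ) ≤ ‖(b : ellOne Γ)‖ := norm_nonneg _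
            have hd : ‖P q b - P p b‖ ≤ 2 * lam := by
              calc ‖P q b - P p b‖ ≤ ‖P q b‖ + ‖P p b‖ := norm_sub_le _ _
                _ ≤ lam * ‖(b : ellOne Γ)‖ + lam * ‖(b : ellOne Γ)‖ := add_le_add h1 h2
                _ ≤ 2 * lam := by nlinarith
            have hnn : (0:ℝ) ≤ ‖P q b - P p b‖ := norm_nonneg _
            nlinarith
        | type2 α ξ p β b =>
          simp only [hτ] at hB hspec
          obtain ⟨hα0, hα1, h1p, hps, hξ, hβ0, hβθ, hbn, hbs⟩ := hspec
          have hbsupp : ∀ γ', b γ' ≠ 0 → γ' ∈ Gq D s := fun γ' hne => by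
            by_contra hc
            exact hne (hbs γ' fun hm => hc hm.1)
          have hbV : (b : ellOne Γ) ∈ Vq D d s := b_mem h b hbsupp
          rw [hsplit, hB, map_add, map_smul, map_smul]
          rcases le_or_gt q p with hqp | hpq
          · have hz : P q ((b : ellOne Γ) - P p b) = 0 := by
              rw [map_sub, P_comp_le h hqp s hbV, sub_self]
            rw [hz, smul_zero, add_zero, norm_smul]
            rcases mem_Gq_iff.1 (show ξ ∈ Gq D p from hξ) with ⟨u, ⟨h1u, hup⟩, hξu⟩
            have hP := IH u (by omega) h1u ξ hξu q
            calc ‖α‖ * ‖P q (eVec ξ)‖ ≤ 1 * lam :=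
                  mul_le_mul (by rw [Real.norm_eq_abs, abs_of_pos hα0]; exact hα1) hP
                    (norm_nonneg _) zero_le_one
              _ = lam := one_mul lam
          · have hPξ : P q (eVec ξ) = eVec ξ :=
              P_fix h q (eVec_mem h q ξ (Gq_mono hpq.le hξ))
            have h1 := Hb s (by omega) b hbsupp q
            have h2 := Hb s (by omega) b hbsupp p
            have hz : P q ((b : ellOne Γ) - P p b) = P q b - P p b := by
              rw [map_sub, P_comp_ge h hpq.le s hbV]
            rw [hz, hPξ]
            have hbnn : (0:ℝ) ≤ ‖(b : ellOne Γ)‖ := norm_nonneg _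
            have hd : ‖P q b - P p b‖ ≤ 2 * lam := by
              calc ‖P q b - P p b‖ ≤ ‖P q b‖ + ‖P p b‖ := norm_sub_le _ _
                _ ≤ lam * ‖(b : ellOne Γ)‖ + lam * ‖(b : ellOne Γ)‖ := add_le_add h1 h2
                _ ≤ 2 * lam := by nlinarith
            have hnn : (0:ℝ) ≤ ‖P q b - P p b‖ := norm_nonneg _
            calc ‖α • eVec ξ + β • (P q b - P p b)‖
                ≤ ‖α • eVec ξ‖ + ‖β • (P q b - P p b)‖ := norm_add_le _ _
              _ = ‖α‖ * 1 + ‖β‖ * ‖P q b - P p b‖ := by rw [norm_smul, norm_smul, norm_eVec]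
              _ ≤ 1 + D.θ * (2 * lam) := by
                  rw [Real.norm_eq_abs, Real.norm_eq_abs, abs_of_pos hα0, abs_of_pos hβ0]
                  have h3 : β * ‖P q b - P p b‖ ≤ D.θ * (2 * lam) := by nlinarith
                  nlinarith
              _ = lam := by nlinarith

end BDAux


theorem stmt10 {Γ : Type*} (D : BDData Γ) (d : Γ → ellOne Γ)
    (P : ℕ → ellOne Γ →L[ℝ] ellOne Γ) (h : Admissible D d P) :
    ∀ q : ℕ, ‖P q‖ ≤ (1 - 2 * D.θ)⁻¹ := by
  intro q
  have hpos : 0 < 1 - 2 * D.θ := by linarith [D.θ_lt_half]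
  have hlampos : (0:ℝ) < (1 - 2 * D.θ)⁻¹ := inv_pos.2 hpos
  refine ContinuousLinearMap.opNorm_le_bound _ hlampos.le fun f => ?_
  refine BDAux.opNorm_aux (P q) _ hlampos.le f fun γ _ => ?_
  obtain ⟨r, h1, hγ⟩ := BDAux.exists_rank D γ
  exact BDAux.main_est h r h1 γ hγ q
end
end

section
/- Under the stated Bourgain–Delbaen assumptions, if ((d_γ)_{γ∈Γ}, (P_q)_{q≥0}) is an admissible pair of families, then for every x ∈ ℓ¹(Γ) one has P_q x → x as q → ∞; in particular the closed linear span of {d_γ : γ ∈ Γ} is all of ℓ¹(Γ). -/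
noncomputable section

namespace BDHelp

variable {Γ : Type*}

lemma ell1_norm_eq (f : ellOne Γ) : ‖f‖ = ∑' γ, ‖f γ‖ := by
  have := lp.norm_rpow_eq_tsum (p := 1) (E := fun _ : Γ => ℝ) (by norm_num) f
  simpa using this

lemma ell1_summable (f : ellOne Γ) : Summable fun γ => ‖f γ‖ := by
  have := (lp.memℓp f).summable (p := 1) (by norm_num)
  simpa using this

lemma ell1_sum_le (f : ellOne Γ) (s : Finset Γ) : ∑ γ ∈ s, ‖f γ‖ ≤ ‖f‖ := by
  have := lp.sum_rpow_le_norm_rpow (p := 1) (E := fun _ : Γ => ℝ) (by norm_num) f s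
  simpa using this

lemma eVec_norm (γ : Γ) : ‖(eVec γ : ellOne Γ)‖ = 1 := by
  letI := Classical.decEq Γ
  have h2 := lp.norm_single (p := (1:ENNReal)) (E := fun _ : Γ => ℝ) (by norm_num)
    γ (1:ℝ)
  simpa [eVec] using h2

lemma smul_eVec (γ : Γ) (c : ℝ) :
    letI := Classical.decEq Γ
    (lp.single 1 γ c : ellOne Γ) = c • eVec γ := by
  letI := Classical.decEq Γ
  have := lp.single_smul (𝕜 := ℝ) (E := fun _ : Γ => ℝ) 1 γ c (1 : ℝ)
  simpa [eVec, smul_eq_mul] using this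

lemma eq_sum_smul_eVec (b : ellOne Γ) (s : Finset Γ) (hb : ∀ γ ∉ s, b γ = 0) :
    b = ∑ γ ∈ s, b γ • eVec γ := by
  letI := Classical.decEq Γ
  have h1 : ∀ γ : Γ, (b γ • eVec γ : ellOne Γ) = lp.single 1 γ (b γ) :=
    fun γ => (smul_eVec γ (b γ)).symm
  apply lp.ext
  funext γ'
  simp only [h1, lp.coeFn_sum, Finset.sum_apply, lp.single_apply]
  rw [Finset.sum_pi_single]
  by_cases hγ' : γ' ∈ s
  · simp [hγ']
  · simp [hγ', hb γ' hγ']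

lemma hasSum_smul_eVec (y : ellOne Γ) : HasSum (fun γ : Γ => y γ • eVec γ) y := by
  letI := Classical.decEq Γ
  have h1 : HasSum (fun γ : Γ => lp.single 1 γ (y γ)) y :=
    lp.hasSum_single (by simp) y
  simpa only [smul_eVec] using h1

end BDHelp

set_option maxHeartbeats 2000000 in
theorem stmt11 {Γ : Type*} (D : BDData Γ) (d : Γ → ellOne Γ)
    (P : ℕ → ellOne Γ →L[ℝ] ellOne Γ) (h : Admissible D d P) :
    (∀ x : ellOne Γ, Filter.Tendsto (fun q => P q x) Filter.atTop (nhds x)) ∧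
    (Submodule.span ℝ (Set.range d)).topologicalClosure = ⊤ := by
  letI := Classical.decEq Γ
  obtain ⟨hP0, hA, hB1, hB⟩ := h
  set C : ℝ := 1 / (1 - 2 * D.θ) with hCdef
  have hθ := D.θ_pos
  have hden : 0 < 1 - 2 * D.θ := by linarith [D.θ_lt_half]
  have hC1 : 1 ≤ C := by rw [hCdef, le_div_iff₀ hden]; linarith
  have hC0 : 0 < C := lt_of_lt_of_le one_pos hC1
  have hCid : 1 + 2 * D.θ * C = C := by rw [hCdef]; field_simp; ring
  set G : ℕ → Set Γ := fun q => ⋃ r ∈ Set.Icc 1 q, D.Δ r with hGdef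
  have hmemG : ∀ {q : ℕ} {γ : Γ}, γ ∈ G q ↔ ∃ r, 1 ≤ r ∧ r ≤ q ∧ γ ∈ D.Δ r := by
    intro q γ
    simp only [hGdef, Set.mem_iUnion, Set.mem_Icc, exists_prop]
    tauto
  have hGmono : ∀ {p q : ℕ}, p ≤ q → G p ⊆ G q := by
    intro p q hpq γ hγ
    rcases hmemG.1 hγ with ⟨r, h1, h2, h3⟩
    exact hmemG.2 ⟨r, h1, h2.trans hpq, h3⟩
  have hGfin : ∀ q, (G q).Finite := by
    intro q
    apply Set.Finite.biUnion (Set.finite_Icc 1 q)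
    intro r hr; exact D.Δ_finite r (Set.mem_Icc.1 hr).1
  have hnotG : ∀ {q r : ℕ} {γ : Γ}, γ ∈ D.Δ (q+1) → r ≤ q → γ ∉ G r := by
    intro q r γ hγ hrq hmem
    rcases hmemG.1 hmem with ⟨s, h1, h2, h3⟩
    exact Set.disjoint_left.1 (D.Δ_disjoint s (q+1) h1 (by omega) (by omega)) h3 hγ
  have hPd0 : ∀ (r : ℕ) (γ : Γ), γ ∉ G r → P r (d γ) = 0 := by
    intro r γ hγ
    rcases Nat.eq_zero_or_pos r with rfl | hr
    · simp [hP0]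
    · exact (hA r hr γ).2 hγ
  have hPd1 : ∀ (r : ℕ) (γ : Γ), 1 ≤ r → γ ∈ G r → P r (d γ) = d γ :=
    fun r γ hr hγ => (hA r hr γ).1 hγ
  set S : ℕ → Submodule ℝ (ellOne Γ) := fun q => Submodule.span ℝ (d '' G q) with hSdef
  have hSmono : ∀ {p q : ℕ}, p ≤ q → S p ≤ S q :=
    fun h => Submodule.span_mono (Set.image_mono (hGmono h))
  have hST : ∀ q, S q ≤ Submodule.span ℝ (Set.range d) :=
    fun q => Submodule.span_mono (Set.image_subset_range d _)
  have hPfix : ∀ q r, q ≤ r → ∀ x ∈ S q, P r x = x := by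
    intro q r hqr x hx
    induction hx using Submodule.span_induction with
    | mem y hy =>
      obtain ⟨γ, hγ, rfl⟩ := hy
      rcases hmemG.1 hγ with ⟨s, hs1, hs2, _⟩
      exact hPd1 r γ (by omega) (hGmono hqr hγ)
    | zero => simp
    | add a b _ _ ha hb => simp [ha, hb]
    | smul c a _ ha => simp [ha]
  have hPmapS : ∀ q r, ∀ x ∈ S q, P r x ∈ S q := by
    intro q r x hx
    induction hx using Submodule.span_induction with
    | mem y hy =>
      obtain ⟨γ, hγ, rfl⟩ := hy
      by_cases hm : γ ∈ G r
      · have hr1 : 1 ≤ r := by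
          rcases hmemG.1 hm with ⟨s, hs1, hs2, _⟩; omega
        rw [hPd1 r γ hr1 hm]
        exact Submodule.subset_span ⟨γ, hγ, rfl⟩
      · rw [hPd0 r γ hm]; exact zero_mem _
    | zero => simp
    | add a b _ _ ha hb => rw [map_add]; exact add_mem ha hb
    | smul c a _ ha => rw [map_smul]; exact Submodule.smul_mem _ _ ha
  have huniq : ∀ {r s : ℕ} {γ : Γ}, 1 ≤ r → 1 ≤ s → γ ∈ D.Δ r → γ ∈ D.Δ s → r = s := by
    intro r s γ hr hs h1 h2
    by_contra hne
    exact Set.disjoint_left.1 (D.Δ_disjoint r s hr hs hne) h1 h2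
  have hGmin : ∀ {a b : ℕ} {γ : Γ}, γ ∈ G a → γ ∈ G b → γ ∈ G (min a b) := by
    intro a b γ ha hb
    rcases hmemG.1 ha with ⟨r, hr1, hr2, hr3⟩
    rcases hmemG.1 hb with ⟨s, hs1, hs2, hs3⟩
    have : r = s := huniq hr1 hs1 hr3 hs3
    exact hmemG.2 ⟨r, hr1, by omega, hr3⟩
  have hPmin : ∀ a b (x : ellOne Γ), x ∈ Submodule.span ℝ (Set.range d) →
      P a (P b x) = P (min a b) x := by
    intro a b x hx
    induction hx using Submodule.span_induction with
    | mem y hy =>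
      obtain ⟨γ, rfl⟩ := hy
      by_cases hb : γ ∈ G b
      · have hb1 : 1 ≤ b := by rcases hmemG.1 hb with ⟨s, h1, h2, _⟩; omega
        rw [hPd1 b γ hb1 hb]
        by_cases ha : γ ∈ G a
        · have ha1 : 1 ≤ a := by rcases hmemG.1 ha with ⟨s, h1, h2, _⟩; omega
          rw [hPd1 a γ ha1 ha, hPd1 (min a b) γ (by omega) (hGmin ha hb)]
        · rw [hPd0 a γ ha, hPd0 (min a b) γ (fun hm => ha (hGmono (min_le_left a b) hm))]
      · rw [hPd0 b γ hb, map_zero, hPd0 (min a b) γ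
          (fun hm => hb (hGmono (min_le_right a b) hm))]
    | zero => simp
    | add u v _ _ hu hv => simp only [map_add, hu, hv]
    | smul c u _ hu => simp only [map_smul, hu]
  -- the key induction
  have key : ∀ q q', q' ≤ q → ∀ γ ∈ G q', eVec γ ∈ S q' ∧ ∀ r, ‖P r (eVec γ)‖ ≤ C := by
    intro q
    induction q with
    | zero =>
      intro q' hq' γ hγ
      rcases hmemG.1 hγ with ⟨s, hs1, hs2, _⟩; omega
    | succ q IH =>
      intro q' hq' γ hγ
      rcases Nat.lt_or_ge q' (q+1) with hlt | hge
      · exact IH q' (by omega) γ hγ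
      have hq'eq : q' = q + 1 := by omega
      subst hq'eq
      rcases hmemG.1 hγ with ⟨s, hs1, hs2, hsγ⟩
      rcases Nat.lt_or_ge s (q+1) with hslt | hsge
      · have hγs : γ ∈ G s := hmemG.2 ⟨s, hs1, le_rfl, hsγ⟩
        obtain ⟨hm, hn⟩ := IH s (by omega) γ hγs
        exact ⟨hSmono (by omega) hm, hn⟩
      have hseq : s = q + 1 := by omega
      have hγΔ : γ ∈ D.Δ (q+1) := hseq ▸ hsγ
      have hdmem : d γ ∈ S (q+1) := Submodule.subset_span ⟨γ, hγ, rfl⟩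
      -- common reasoning for the norm bound in the "high" regime
      have hhigh : eVec γ ∈ S (q+1) → ∀ r, q + 1 ≤ r → ‖P r (eVec γ)‖ ≤ C := by
        intro hm r hr
        rw [hPfix (q+1) r hr _ hm, BDHelp.eVec_norm]; exact hC1
      rcases Nat.eq_zero_or_pos q with rfl | hq1
      · -- q = 0 : γ ∈ Δ 1, eVec γ = d γ
        have hed : eVec γ = d γ := by
          have := hB1 γ hγΔ
          exact sub_eq_zero.1 this
        have hmem : eVec γ ∈ S 1 := hed ▸ hdmem
        refine ⟨hmem, fun r => ?_⟩
        rcases Nat.eq_zero_or_pos r with rfl | hr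
        · rw [hP0]; simpa using hC0.le
        · exact hhigh hmem r hr
      -- q ≥ 1 : use τ
      have hspec := D.τ_spec q hq1 γ hγΔ
      have hceq := hB q hq1 γ hγΔ
      have hIH1 : ∀ γ' ∈ G q, eVec γ' ∈ S q := fun γ' hg => (IH q le_rfl γ' hg).1
      have hIH2 : ∀ γ' ∈ G q, ∀ r, ‖P r (eVec γ')‖ ≤ C := fun γ' hg => (IH q le_rfl γ' hg).2
      have hbfacts : ∀ b : ellOne Γ, ‖b‖ ≤ 1 → (∀ γ', γ' ∉ G q → b γ' = 0) →
          b ∈ S q ∧ ∀ r, ‖P r b‖ ≤ C := by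
        intro b hbn hbs
        set F := (hGfin q).toFinset with hF
        have hFmem : ∀ γ', γ' ∈ F ↔ γ' ∈ G q := by
          intro γ'; simp [hF, Set.Finite.mem_toFinset]
        have hsupp : ∀ γ' ∉ F, b γ' = 0 := fun γ' hg => hbs γ' (fun hm => hg ((hFmem γ').2 hm))
        have hdec := BDHelp.eq_sum_smul_eVec b F hsupp
        constructor
        · rw [hdec]
          exact Submodule.sum_mem _ fun γ' hγ' =>
            Submodule.smul_mem _ _ (hIH1 γ' ((hFmem γ').1 hγ'))
        · intro r
          rw [hdec, map_sum]
          calc ‖∑ γ' ∈ F, P r (b γ' • eVec γ')‖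
              ≤ ∑ γ' ∈ F, ‖P r (b γ' • eVec γ')‖ := norm_sum_le _ _
            _ ≤ ∑ γ' ∈ F, ‖b γ'‖ * C := by
                apply Finset.sum_le_sum
                intro γ' hγ'
                rw [map_smul, norm_smul]
                exact mul_le_mul_of_nonneg_left (hIH2 γ' ((hFmem γ').1 hγ') r) (norm_nonneg _)
            _ = (∑ γ' ∈ F, ‖b γ'‖) * C := (Finset.sum_mul _ _ _).symm
            _ ≤ 1 * C := by
                apply mul_le_mul_of_nonneg_right _ hC0.le
                exact (BDHelp.ell1_sum_le b F).trans hbn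
            _ = C := one_mul C
      rcases hτγ : D.τ γ with ⟨α, ξ⟩ | ⟨p, β, b⟩ | ⟨α, ξ, p, β, b⟩ <;>
        rw [hτγ] at hspec hceq
      · -- Type 0
        obtain ⟨hα0, hα1, hξ⟩ : 0 ≤ α ∧ α ≤ 1 ∧ ξ ∈ G q := hspec
        have hceq' : eVec γ - d γ = α • eVec ξ := hceq
        have hee : eVec γ = d γ + α • eVec ξ := sub_eq_iff_eq_add'.1 hceq'
        have hmem : eVec γ ∈ S (q+1) := by
          rw [hee]
          exact add_mem hdmem (Submodule.smul_mem _ _ (hSmono (Nat.le_succ q) (hIH1 ξ hξ)))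
        refine ⟨hmem, fun r => ?_⟩
        rcases Nat.lt_or_ge q r with hr | hr
        · exact hhigh hmem r hr
        · rw [hee, map_add, hPd0 r γ (hnotG hγΔ hr), zero_add, map_smul, norm_smul]
          calc ‖α‖ * ‖P r (eVec ξ)‖ ≤ 1 * C := by
                apply mul_le_mul _ (hIH2 ξ hξ r) (norm_nonneg _) zero_le_one
                rw [Real.norm_eq_abs, abs_of_nonneg hα0]; exact hα1
            _ = C := one_mul C
      · -- Type 1
        obtain ⟨hpq, hβ0, hβθ, hbn, hbs⟩ :
            p < q ∧ 0 < β ∧ β ≤ D.θ ∧ ‖b‖ ≤ 1 ∧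
              ∀ γ', γ' ∉ G q \ G p → b γ' = 0 := hspec
        have hceq' : eVec γ - d γ = β • (b - P p b) := hceq
        have hbs' : ∀ γ', γ' ∉ G q → b γ' = 0 := fun γ' hg => hbs γ' (fun hm => hg hm.1)
        obtain ⟨hbS, hbnorm⟩ := hbfacts b hbn hbs'
        have hee : eVec γ = d γ + β • (b - P p b) := sub_eq_iff_eq_add'.1 hceq'
        have hmem : eVec γ ∈ S (q+1) := by
          rw [hee]
          exact add_mem hdmem (Submodule.smul_mem _ _
            (hSmono (Nat.le_succ q) (sub_mem hbS (hPmapS q p b hbS))))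
        refine ⟨hmem, fun r => ?_⟩
        rcases Nat.lt_or_ge q r with hr | hr
        · exact hhigh hmem r hr
        · rw [hee, map_add, hPd0 r γ (hnotG hγΔ hr), zero_add, map_smul, map_sub,
            hPmin r p b (hST q hbS), norm_smul]
          have hsub : ‖P r b - P (min r p) b‖ ≤ C + C :=
            (norm_sub_le _ _).trans (add_le_add (hbnorm r) (hbnorm (min r p)))
          have hβn : ‖β‖ ≤ D.θ := by rw [Real.norm_eq_abs, abs_of_pos hβ0]; exact hβθ
          calc ‖β‖ * ‖P r b - P (min r p) b‖ ≤ D.θ * (C + C) :=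
                mul_le_mul hβn hsub (norm_nonneg _) hθ.le
            _ ≤ C := by nlinarith
      · -- Type 2
        obtain ⟨hα0, hα1, hp1, hpq, hξ, hβ0, hβθ, hbn, hbs⟩ :
            0 < α ∧ α ≤ 1 ∧ 1 ≤ p ∧ p < q ∧ ξ ∈ G p ∧ 0 < β ∧ β ≤ D.θ ∧ ‖b‖ ≤ 1 ∧
              ∀ γ', γ' ∉ G q \ G p → b γ' = 0 := hspec
        have hceq' : eVec γ - d γ = α • eVec ξ + β • (b - P p b) := hceq
        have hbs' : ∀ γ', γ' ∉ G q → b γ' = 0 := fun γ' hg => hbs γ' (fun hm => hg hm.1)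
        obtain ⟨hbS, hbnorm⟩ := hbfacts b hbn hbs'
        have hξS : eVec ξ ∈ S p := (IH p (by omega) ξ hξ).1
        have hξq : ξ ∈ G q := hGmono (by omega) hξ
        have hee : eVec γ = d γ + (α • eVec ξ + β • (b - P p b)) := sub_eq_iff_eq_add'.1 hceq'
        have hmem : eVec γ ∈ S (q+1) := by
          rw [hee]
          refine add_mem hdmem (hSmono (Nat.le_succ q) (add_mem ?_ ?_))
          · exact Submodule.smul_mem _ _ (hIH1 ξ hξq)
          · exact Submodule.smul_mem _ _ (sub_mem hbS (hPmapS q p b hbS))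
        refine ⟨hmem, fun r => ?_⟩
        rcases Nat.lt_or_ge q r with hr | hr
        · exact hhigh hmem r hr
        · rw [hee, map_add, hPd0 r γ (hnotG hγΔ hr), zero_add, map_add, map_smul, map_smul,
            map_sub, hPmin r p b (hST q hbS)]
          have hαn : ‖α‖ ≤ 1 := by rw [Real.norm_eq_abs, abs_of_pos hα0]; exact hα1
          have hβn : ‖β‖ ≤ D.θ := by rw [Real.norm_eq_abs, abs_of_pos hβ0]; exact hβθ
          rcases le_or_gt r p with hrp | hpr
          · rw [min_eq_left hrp, sub_self, smul_zero, add_zero, norm_smul]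
            calc ‖α‖ * ‖P r (eVec ξ)‖ ≤ 1 * C :=
                  mul_le_mul hαn (hIH2 ξ hξq r) (norm_nonneg _) zero_le_one
              _ = C := one_mul C
          · rw [min_eq_right hpr.le, hPfix p r hpr.le _ hξS]
            have h1 : ‖α • eVec ξ‖ ≤ 1 := by
              rw [norm_smul, BDHelp.eVec_norm, mul_one]; exact hαn
            have hsub : ‖P r b - P p b‖ ≤ C + C :=
              (norm_sub_le _ _).trans (add_le_add (hbnorm r) (hbnorm p))
            have h2 : ‖β • (P r b - P p b)‖ ≤ D.θ * (C + C) := by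
              rw [norm_smul]
              exact mul_le_mul hβn hsub (norm_nonneg _) hθ.le
            calc ‖α • eVec ξ + β • (P r b - P p b)‖
                ≤ ‖α • eVec ξ‖ + ‖β • (P r b - P p b)‖ := norm_add_le _ _
              _ ≤ 1 + D.θ * (C + C) := add_le_add h1 h2
              _ = 1 + 2 * D.θ * C := by ring
              _ = C := hCid
  -- consequences of key
  have hlev : ∀ γ : Γ, ∃ n, 1 ≤ n ∧ γ ∈ D.Δ n := by
    intro γ
    have hu : γ ∈ ⋃ q ∈ {q : ℕ | 1 ≤ q}, D.Δ q := D.Δ_cover ▸ Set.mem_univ γ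
    rcases Set.mem_iUnion₂.1 hu with ⟨n, hn, hγ⟩
    exact ⟨n, hn, hγ⟩
  choose lev hlev1 hlev2 using hlev
  have hlevG : ∀ γ : Γ, γ ∈ G (lev γ) := fun γ => hmemG.2 ⟨lev γ, hlev1 γ, le_rfl, hlev2 γ⟩
  have keyS : ∀ (γ : Γ) {n}, γ ∈ G n → eVec γ ∈ S n := fun γ _ hγ => (key _ _ le_rfl γ hγ).1
  have hPeVec : ∀ (r : ℕ) (γ : Γ), ‖P r (eVec γ)‖ ≤ C :=
    fun r γ => (key _ _ le_rfl γ (hlevG γ)).2 r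
  have heT : ∀ γ : Γ, eVec γ ∈ Submodule.span ℝ (Set.range d) :=
    fun γ => hST _ (keyS γ (hlevG γ))
  -- uniform operator norm bound
  have hopnorm : ∀ (r : ℕ) (y : ellOne Γ), ‖P r y‖ ≤ C * ‖y‖ := by
    intro r y
    have h1 : HasSum (fun γ : Γ => y γ • eVec γ) y := BDHelp.hasSum_smul_eVec y
    have h2 : HasSum (fun γ : Γ => y γ • P r (eVec γ)) (P r y) := by
      have := (P r).hasSum h1
      simpa only [map_smul] using this
    have hsummable : Summable fun γ : Γ => ‖y γ‖ * C :=
      (BDHelp.ell1_summable y).mul_right C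
    have hle : ∀ γ : Γ, ‖y γ • P r (eVec γ)‖ ≤ ‖y γ‖ * C := by
      intro γ
      rw [norm_smul]
      exact mul_le_mul_of_nonneg_left (hPeVec r γ) (norm_nonneg _)
    have hsum2 : Summable fun γ : Γ => ‖y γ • P r (eVec γ)‖ :=
      Summable.of_nonneg_of_le (fun γ => norm_nonneg _) hle hsummable
    calc ‖P r y‖ = ‖∑' γ, y γ • P r (eVec γ)‖ := by rw [h2.tsum_eq]
      _ ≤ ∑' γ, ‖y γ • P r (eVec γ)‖ := norm_tsum_le_tsum_norm hsum2
      _ ≤ ∑' γ, ‖y γ‖ * C := Summable.tsum_le_tsum hle hsum2 hsummable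
      _ = (∑' γ, ‖y γ‖) * C := tsum_mul_right
      _ = C * ‖y‖ := by rw [← BDHelp.ell1_norm_eq]; ring
  -- the convergence statement
  have htend : ∀ x : ellOne Γ, Filter.Tendsto (fun q => P q x) Filter.atTop (nhds x) := by
    intro x
    rw [Metric.tendsto_atTop]
    intro ε hε
    set δ := ε / (2 * (C + 1)) with hδdef
    have hδ : 0 < δ := by positivity
    have hx : HasSum (fun γ : Γ => x γ • eVec γ) x := BDHelp.hasSum_smul_eVec x
    rcases Metric.tendsto_atTop.1 hx δ hδ with ⟨F, hF⟩
    have hFF := hF F le_rfl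
    set y := ∑ γ ∈ F, x γ • eVec γ with hy
    set N := F.sup lev with hN
    have hyS : y ∈ S N := by
      apply Submodule.sum_mem
      intro γ hγ
      refine Submodule.smul_mem _ _ (hSmono ?_ (keyS γ (hlevG γ)))
      exact Finset.le_sup hγ
    refine ⟨N, fun q hq => ?_⟩
    have hPy : P q y = y := hPfix N q hq y hyS
    have hdxy : ‖x - y‖ < δ := by
      rw [← dist_eq_norm, dist_comm]
      exact hFF
    have hsplit : P q x - x = P q (x - y) + (y - x) := by
      rw [map_sub, hPy]; abel
    have hb1 : ‖P q (x - y)‖ ≤ C * ‖x - y‖ := hopnorm q _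
    have hb2 : dist (P q x) x ≤ ‖P q (x - y)‖ + ‖y - x‖ := by
      rw [dist_eq_norm, hsplit]; exact norm_add_le _ _
    have hrev : ‖y - x‖ = ‖x - y‖ := norm_sub_rev _ _
    have hmul : C * ‖x - y‖ ≤ C * δ := mul_le_mul_of_nonneg_left hdxy.le hC0.le
    have heq2 : (C + 1) * δ = ε / 2 := by
      rw [hδdef]; field_simp
    have hexp : C * δ + δ = (C + 1) * δ := by ring
    linarith
  refine ⟨htend, ?_⟩
  refine Submodule.eq_top_iff'.2 fun x => ?_
  have hx : HasSum (fun γ : Γ => x γ • eVec γ) x := BDHelp.hasSum_smul_eVec x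
  have hmem : ∀ F : Finset Γ, (∑ γ ∈ F, x γ • eVec γ) ∈ Submodule.span ℝ (Set.range d) :=
    fun F => Submodule.sum_mem _ fun γ _ => Submodule.smul_mem _ _ (heT γ)
  have hcl : x ∈ closure ((Submodule.span ℝ (Set.range d) : Submodule ℝ (ellOne Γ)) :
      Set (ellOne Γ)) :=
    mem_closure_of_tendsto hx (Filter.Eventually.of_forall hmem)
  rwa [← Submodule.topologicalClosure_coe, SetLike.mem_coe] at hcl
end
end

section
/- Let X be a real Banach space, k ≥ 1 a natural number, and S : X → X a bounded linear operator with S^k = 0. Let (x_i)_{i∈ℕ} be a sequence in X with ‖x_i‖ = 1 for every i, and let λ_0, …, λ_{k-1} ∈ ℝ be scalars such that ∑_{j=0}^{k-1} λ_j S^j x_i → 0 as i → ∞. Then: (a) if the sequence (S^(k-1) x_i) does not converge to 0, then λ_j = 0 for every j; (b) if m is a natural number with 1 ≤ m ≤ k−1 such that S^m x_i → 0 as i → ∞ while for each j < m the sequence (S^j x_i) does not converge to 0, then λ_j = 0 for all j < m. -/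
open Filter

lemma keylem16 {X : Type*} [NormedAddCommGroup X] [NormedSpace ℝ X]
    {k m : ℕ} (hm1 : 1 ≤ m) (S : X →L[ℝ] X)
    (x : ℕ → X) (lam : Fin k → ℝ)
    (hconv : Tendsto (fun i => ∑ j : Fin k, lam j • (S ^ (j : ℕ)) (x i)) atTop (nhds 0))
    (hSm : Tendsto (fun i => (S ^ m) (x i)) atTop (nhds 0))
    (hnot : ¬ Tendsto (fun i => (S ^ (m - 1)) (x i)) atTop (nhds 0)) :
    ∀ j : Fin k, (j : ℕ) < m → lam j = 0 := by
  have main : ∀ p : ℕ, p < m → ∀ j : Fin k, (j : ℕ) = p → lam j = 0 := by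
    intro p
    induction p using Nat.strong_induction_on with
    | _ p IH =>
      intro hpm j hjp
      by_contra hne
      have h1 : Tendsto (fun i => (S ^ (m - 1 - p))
          (∑ j' : Fin k, lam j' • (S ^ (j' : ℕ)) (x i))) atTop (nhds 0) := by
        have := ((S ^ (m - 1 - p)).continuous.tendsto 0).comp hconv
        simp only [Function.comp_def, map_zero] at this
        exact this
      have h2 : ∀ i, (S ^ (m - 1 - p)) (∑ j' : Fin k, lam j' • (S ^ (j' : ℕ)) (x i))
          = ∑ j' : Fin k, lam j' • (S ^ (m - 1 - p + (j' : ℕ))) (x i) := by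
        intro i
        rw [map_sum]
        refine Finset.sum_congr rfl fun j' _ => ?_
        rw [map_smul, pow_add]
        rfl
      have h1' : Tendsto (fun i => ∑ j' : Fin k, lam j' • (S ^ (m - 1 - p + (j' : ℕ))) (x i))
          atTop (nhds 0) := by
        simpa only [h2] using h1
      have hrest : Tendsto (fun i => ∑ j' ∈ Finset.univ.erase j,
          lam j' • (S ^ (m - 1 - p + (j' : ℕ))) (x i)) atTop (nhds 0) := by
        have : (0 : X) = ∑ j' ∈ Finset.univ.erase j, (0 : X) := by simp
        rw [this]
        refine tendsto_finset_sum _ fun j' hj' => ?_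
        have hne' : (j' : ℕ) ≠ p := fun h => (Finset.mem_erase.mp hj').1 (Fin.ext (h.trans hjp.symm))
        rcases lt_or_gt_of_ne hne' with hlt | hgt
        · have : lam j' = 0 := IH _ hlt (lt_trans hlt hpm) j' rfl
          simp [this]
        · -- exponent ≥ m
          have he : m - 1 - p + (j' : ℕ) = (m - 1 - p + (j' : ℕ) - m) + m := by omega
          rw [he, pow_add]
          have : Tendsto (fun i => (S ^ (m - 1 - p + (j' : ℕ) - m)) ((S ^ m) (x i)))
              atTop (nhds 0) := by
            have := ((S ^ (m - 1 - p + (j' : ℕ) - m)).continuous.tendsto 0).comp hSm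
            simpa only [Function.comp_def, map_zero] using this
          simpa using this.const_smul (lam j')
      have hsplit : ∀ i, lam j • (S ^ (m - 1)) (x i) =
          (∑ j' : Fin k, lam j' • (S ^ (m - 1 - p + (j' : ℕ))) (x i)) -
          (∑ j' ∈ Finset.univ.erase j, lam j' • (S ^ (m - 1 - p + (j' : ℕ))) (x i)) := by
        intro i
        rw [← Finset.add_sum_erase _ _ (Finset.mem_univ j)]
        have : m - 1 - p + (j : ℕ) = m - 1 := by omega
        rw [this]
        abel
      have hterm : Tendsto (fun i => lam j • (S ^ (m - 1)) (x i)) atTop (nhds 0) := by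
        simp_rw [hsplit]
        simpa using h1'.sub hrest
      apply hnot
      have := hterm.const_smul (lam j)⁻¹
      simpa [smul_smul, inv_mul_cancel₀ hne] using this
  intro j hj
  exact main _ hj j rfl

theorem stmt16 {X : Type*} [NormedAddCommGroup X] [NormedSpace ℝ X] [CompleteSpace X]
    (k : ℕ) (hk : 1 ≤ k) (S : X →L[ℝ] X) (hS : S ^ k = 0)
    (x : ℕ → X) (hx : ∀ i, ‖x i‖ = 1) (lam : Fin k → ℝ)
    (hconv : Tendsto (fun i => ∑ j : Fin k, lam j • (S ^ (j : ℕ)) (x i)) atTop (nhds 0)) :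
    ((¬ Tendsto (fun i => (S ^ (k - 1)) (x i)) atTop (nhds 0)) → ∀ j, lam j = 0) ∧
    (∀ m : ℕ, 1 ≤ m → m ≤ k - 1 →
      Tendsto (fun i => (S ^ m) (x i)) atTop (nhds 0) →
      (∀ j < m, ¬ Tendsto (fun i => (S ^ j) (x i)) atTop (nhds 0)) →
      ∀ j : Fin k, (j : ℕ) < m → lam j = 0) := by
  constructor
  · intro hnot j
    have hSk : Tendsto (fun i => (S ^ k) (x i)) atTop (nhds 0) := by
      simp [hS]
    exact keylem16 hk S x lam hconv hSk hnot j j.isLt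
  · intro m hm1 _ hSm hnot j hj
    exact keylem16 hm1 S x lam hconv hSm (hnot (m - 1) (by omega)) j hj
end
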